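/- arXiv:2111.06294 — 2 statements merged into one kernel-verified Lean document; each statement's English description precedes it below -/
import Mathlib

section
/- Let S be a Sauer Matrix of size 4 of type (1,3), i.e., the first row of S contains at least one entry equal to 1 and rows 2, 3, 4 contain no entry equal to 1. If r ∈ [0,1)^4 is such that r+S is totally 1-submodular, then r = (0, 1/2, 1/2, 1/2)ᵀ. -/
set_option linter.unreachableTactic false
set_option linter.unusedTactic false
set_option linter.unusedVariables false
set_option maxHeartbeats 1000000

open Matrix

/-- Every `k×k` minor of `A` is at most `c` in absolute value. -/
def MinorsLE {m n : ℕ} (k : ℕ) (A : Matrix (Fin m) (Fin n) ℝ) (c : ℝ) : Prop :=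
  ∀ (f : Fin k ↪ Fin m) (g : Fin k ↪ Fin n), |(A.submatrix f g).det| ≤ c

/-- `A` is totally 1-submodular: all its minors, of any size, are at most `1`
in absolute value. -/
def Totally1Submodular {m n : ℕ} (A : Matrix (Fin m) (Fin n) ℝ) : Prop :=
  ∀ k : ℕ, MinorsLE k A 1

/-- The shifted matrix `t + A`, whose columns are `t + A_j`. -/
def shiftMat {m n : ℕ} (t : Fin m → ℝ) (A : Matrix (Fin m) (Fin n) ℝ) :
    Matrix (Fin m) (Fin n) ℝ :=
  Matrix.of fun i j => t i + A i j

/-- All entries of `A` lie in `{-1, 0, 1}`. -/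
def SignEntries {m n : ℕ} (A : Matrix (Fin m) (Fin n) ℝ) : Prop :=
  ∀ i j, A i j = -1 ∨ A i j = 0 ∨ A i j = 1

/-- The data admissible for the shifted Heller constant `h_s(m)`: a translation vector
`t ∈ [0,1)^m \ {0}` and a matrix `A ∈ {-1,0,1}^{m×n}` with pairwise distinct columns
such that `t + A` is totally 1-submodular. -/
def ShiftedAdmissible (m n : ℕ) (t : Fin m → ℝ) (A : Matrix (Fin m) (Fin n) ℝ) : Prop :=
  (∀ i, 0 ≤ t i ∧ t i < 1) ∧ t ≠ 0 ∧ SignEntries A ∧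
    Function.Injective A.transpose ∧ Totally1Submodular (shiftMat t A)

/-- A Sauer Matrix of size `k`: a `{-1,0,1}`-matrix of format `k × 2^k` having, for each
subset `E ⊆ {1,…,k}`, exactly one column whose support equals `E`. -/
def IsSauer {k : ℕ} (S : Matrix (Fin k) (Fin (2 ^ k)) ℝ) : Prop :=
  SignEntries S ∧ ∀ E : Set (Fin k), ∃! j : Fin (2 ^ k), ∀ i, S i j ≠ 0 ↔ i ∈ E

def emb1 {n : ℕ} (a : Fin n) : Fin 1 ↪ Fin n :=
  ⟨![a], id (fun x y _ => Subsingleton.elim x y : Function.Injective ![a])⟩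

def emb3 {n : ℕ} (a b c : Fin n) (hab : a ≠ b) (hac : a ≠ c) (hbc : b ≠ c) :
    Fin 3 ↪ Fin n :=
  ⟨![a, b, c], id (by intro x y h; fin_cases x <;> fin_cases y <;> simp_all : Function.Injective ![a, b, c])⟩

def emb4 {n : ℕ} (a b c d : Fin n) (hab : a ≠ b) (hac : a ≠ c) (had : a ≠ d)
    (hbc : b ≠ c) (hbd : b ≠ d) (hcd : c ≠ d) : Fin 4 ↪ Fin n :=
  ⟨![a, b, c, d], id (by intro x y h; fin_cases x <;> fin_cases y <;> simp_all : Function.Injective ![a, b, c, d])⟩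

section helpers
variable {S : Matrix (Fin 4) (Fin (2^4)) ℝ}

lemma entry_zero {E : Set (Fin 4)} {c : Fin 16} (hc : ∀ i, S i c ≠ 0 ↔ i ∈ E)
    {i : Fin 4} (hi : i ∉ E) : S i c = 0 := by
  by_contra h; exact hi ((hc i).1 h)

lemma entry_neg (hsgn : SignEntries S) (htype2 : ∀ i j, i ≠ 0 → S i j ≠ 1)
    {E : Set (Fin 4)} {c : Fin 16} (hc : ∀ i, S i c ≠ 0 ↔ i ∈ E)
    {i : Fin 4} (hi : i ∈ E) (hi0 : i ≠ 0) : S i c = -1 := by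
  rcases hsgn i c with h | h | h
  · exact h
  · exact absurd hi (by rw [← hc i]; simp [h])
  · exact absurd h (htype2 i c hi0)

lemma entry_sign (hsgn : SignEntries S) {E : Set (Fin 4)} {c : Fin 16}
    (hc : ∀ i, S i c ≠ 0 ↔ i ∈ E) (h0 : (0 : Fin 4) ∈ E) :
    S 0 c = 1 ∨ S 0 c = -1 := by
  rcases hsgn 0 c with h | h | h
  · exact Or.inr h
  · exact absurd h0 (by rw [← hc 0]; simp [h])
  · exact Or.inl h

lemma col_ne {E E' : Set (Fin 4)} {c c' : Fin 16}
    (hc : ∀ i, S i c ≠ 0 ↔ i ∈ E) (hc' : ∀ i, S i c' ≠ 0 ↔ i ∈ E')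
    (hEE' : E ≠ E') : c ≠ c' := by
  intro h
  exact hEE' (Set.ext fun i => by rw [← hc i, h, hc' i])

end helpers

set_option maxHeartbeats 4000000 in
lemma det_fin_four {R : Type*} [CommRing R] (M : Matrix (Fin 4) (Fin 4) R) :
    M.det = M 0 0 * M 1 1 * M 2 2 * M 3 3 - M 0 0 * M 1 1 * M 2 3 * M 3 2 - M 0 0 * M 1 2 * M 2 1 * M 3 3 + M 0 0 * M 1 2 * M 2 3 * M 3 1 + M 0 0 * M 1 3 * M 2 1 * M 3 2 - M 0 0 * M 1 3 * M 2 2 * M 3 1 - M 0 1 * M 1 0 * M 2 2 * M 3 3 + M 0 1 * M 1 0 * M 2 3 * M 3 2 + M 0 1 * M 1 2 * M 2 0 * M 3 3 - M 0 1 * M 1 2 * M 2 3 * M 3 0 - M 0 1 * M 1 3 * M 2 0 * M 3 2 + M 0 1 * M 1 3 * M 2 2 * M 3 0 + M 0 2 * M 1 0 * M 2 1 * M 3 3 - M 0 2 * M 1 0 * M 2 3 * M 3 1 - M 0 2 * M 1 1 * M 2 0 * M 3 3 + M 0 2 * M 1 1 * M 2 3 * M 3 0 + M 0 2 * M 1 3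 * M 2 0 * M 3 1 - M 0 2 * M 1 3 * M 2 1 * M 3 0 - M 0 3 * M 1 0 * M 2 1 * M 3 2 + M 0 3 * M 1 0 * M 2 2 * M 3 1 + M 0 3 * M 1 1 * M 2 0 * M 3 2 - M 0 3 * M 1 1 * M 2 2 * M 3 0 - M 0 3 * M 1 2 * M 2 0 * M 3 1 + M 0 3 * M 1 2 * M 2 1 * M 3 0 := by
  rw [Matrix.det_succ_row_zero, Fin.sum_univ_four]
  norm_num [Matrix.det_fin_three, Fin.succAbove, Fin.lt_def, Matrix.submatrix_apply,
    show ((2:Fin 3).succ : Fin 4) = 3 from rfl, show ((1:Fin 3).succ : Fin 4) = 2 from rfl,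
    show (Fin.castSucc (2:Fin 3) : Fin 4) = 2 from rfl, show (Fin.castSucc (1:Fin 3) : Fin 4) = 1 from rfl,
    show (Fin.castSucc (0:Fin 3) : Fin 4) = 0 from rfl, show ((3:Fin 4):ℕ) = 3 from rfl,
    show ((2:Fin 4):ℕ) = 2 from rfl, show ((1:Fin 4):ℕ) = 1 from rfl, show ((0:Fin 4):ℕ) = 0 from rfl]
  ring

set_option maxHeartbeats 4000000 in
lemma core (r1 r2 r3 ae a1 a2 a3 a12 a13 a23 a123 : ℝ)
    (hsae : ae = 1 ∨ ae = -1)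
    (hsa1 : a1 = 1 ∨ a1 = -1)
    (hsa2 : a2 = 1 ∨ a2 = -1)
    (hsa3 : a3 = 1 ∨ a3 = -1)
    (hsa12 : a12 = 1 ∨ a12 = -1)
    (hsa13 : a13 = 1 ∨ a13 = -1)
    (hsa23 : a23 = 1 ∨ a23 = -1)
    (hsa123 : a123 = 1 ∨ a123 = -1)
    (hplus : ae = 1 ∨ a1 = 1 ∨ a2 = 1 ∨ a3 = 1 ∨ a12 = 1 ∨ a13 = 1 ∨ a23 = 1 ∨ a123 = 1)
    (hb1 : 0 ≤ r1) (hb1' : r1 ≤ 1) (hb2 : 0 ≤ r2) (hb2' : r2 ≤ 1) (hb3 : 0 ≤ r3) (hb3' : r3 ≤ 1)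
    (h0 : |(-1:ℝ) * a12 + a12 * r1 + a123 + (-1:ℝ) * a123 * r1| ≤ 1)
    (h1 : |a12 + (-1:ℝ) * a12 * r2 + (-1:ℝ) * a123 + a123 * r2| ≤ 1)
    (h2 : |a1 + (-1:ℝ) * a1 * r1 + (-1:ℝ) * a12 + a12 * r1| ≤ 1)
    (h3 : |(-1:ℝ) * a23 * r1 + a3 * r1| ≤ 1)
    (h4 : |a12 * r3 + (-1:ℝ) * a2 * r3| ≤ 1)
    (h5 : |(-1:ℝ) * a12 + a12 * r2 + a2 + (-1:ℝ) * a2 * r2| ≤ 1)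
    (h6 : |(-1:ℝ) * a13 * r2 + a3 * r2| ≤ 1)
    (h7 : |a13 + (-1:ℝ) * a13 * r3 + (-1:ℝ) * a3 + a3 * r3| ≤ 1)
    (h8 : |a123 + (-1:ℝ) * a123 * r2 + (-1:ℝ) * a23 + a23 * r2| ≤ 1)
    (h9 : |(-1:ℝ) * a123 + a123 * r3 + a23 + (-1:ℝ) * a23 * r3| ≤ 1)
    (h10 : |(-1:ℝ) * a3 * r3 + (-1:ℝ) * ae + ae * r1 + ae * r2 + ae * r3| ≤ 1)
    (h11 : |a3 * r1 + a3 * r2 + (-1:ℝ) * a3 * r3 + (-1:ℝ) * ae + ae * r3| ≤ 1)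
    (h12 : |(-1:ℝ) * a12 + a12 * r1 + a12 * r2 + (-1:ℝ) * a12 * r3 + a123 * r3| ≤ 1)
    (h13 : |a12 + (-1:ℝ) * a12 * r3 + (-2:ℝ) * a123 + a123 * r1 + a123 * r2 + a123 * r3| ≤ 1)
    (h14 : |a2 * r2 + ae + (-1:ℝ) * ae * r1 + (-1:ℝ) * ae * r2 + (-1:ℝ) * ae * r3| ≤ 1)
    (h15 : |(-1:ℝ) * a2 * r1 + a2 * r2 + (-1:ℝ) * a2 * r3 + ae + (-1:ℝ) * ae * r2| ≤ 1)
    (h16 : |(-1:ℝ) * a123 * r2 + a13 + (-1:ℝ) * a13 * r1 + a13 * r2 + (-1:ℝ) * a13 * r3| ≤ 1)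
    (h17 : |2 * a123 + (-1:ℝ) * a123 * r1 + (-1:ℝ) * a123 * r2 + (-1:ℝ) * a123 * r3 + (-1:ℝ) * a13 + a13 * r2| ≤ 1)
    (h18 : |(-1:ℝ) * a1 * r1 + (-1:ℝ) * ae + ae * r1 + ae * r2 + ae * r3| ≤ 1)
    (h19 : |(-1:ℝ) * a1 * r1 + a1 * r2 + a1 * r3 + (-1:ℝ) * ae + ae * r1| ≤ 1)
    (h20 : |a123 * r1 + (-1:ℝ) * a23 + (-1:ℝ) * a23 * r1 + a23 * r2 + a23 * r3| ≤ 1)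
    (h21 : |(-2:ℝ) * a123 + a123 * r1 + a123 * r2 + a123 * r3 + a23 + (-1:ℝ) * a23 * r1| ≤ 1)
    (h22 : |a12 * r1 + a12 * r2 + (-1:ℝ) * a12 * r3 + a13 * r1 + (-1:ℝ) * a13 * r2 + a13 * r3 + (-1:ℝ) * a23 * r1 + a23 * r2 + a23 * r3 + 2 * ae + (-1:ℝ) * ae * r1 + (-1:ℝ) * ae * r2 + (-1:ℝ) * ae * r3| ≤ 1)
    (h23 : |(-1:ℝ) * a1 + (-1:ℝ) * a1 * r1 + a1 * r2 + a1 * r3 + a123 + (-1:ℝ) * a123 * r1 + (-1:ℝ) * a123 * r2 + (-1:ℝ) * a123 * r3 + (-1:ℝ) * a2 + a2 * r1 + (-1:ℝ) * a2 * r2 + a2 * r3 + (-1:ℝ) * a3 + a3 * r1 + a3 * r2 + (-1:ℝ) * a3 * r3| ≤ 1)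
    : r1 = 1/2 ∧ r2 = 1/2 ∧ r3 = 1/2 := by
  rw [abs_le] at h0 h1 h2 h3 h4 h5 h6 h7 h8 h9 h10 h11 h12 h13 h14 h15 h16 h17 h18 h19 h20 h21 h22 h23
  obtain ⟨h0a, h0b⟩ := h0
  obtain ⟨h1a, h1b⟩ := h1
  obtain ⟨h2a, h2b⟩ := h2
  obtain ⟨h3a, h3b⟩ := h3
  obtain ⟨h4a, h4b⟩ := h4
  obtain ⟨h5a, h5b⟩ := h5
  obtain ⟨h6a, h6b⟩ := h6
  obtain ⟨h7a, h7b⟩ := h7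
  obtain ⟨h8a, h8b⟩ := h8
  obtain ⟨h9a, h9b⟩ := h9
  obtain ⟨h10a, h10b⟩ := h10
  obtain ⟨h11a, h11b⟩ := h11
  obtain ⟨h12a, h12b⟩ := h12
  obtain ⟨h13a, h13b⟩ := h13
  obtain ⟨h14a, h14b⟩ := h14
  obtain ⟨h15a, h15b⟩ := h15
  obtain ⟨h16a, h16b⟩ := h16
  obtain ⟨h17a, h17b⟩ := h17
  obtain ⟨h18a, h18b⟩ := h18
  obtain ⟨h19a, h19b⟩ := h19
  obtain ⟨h20a, h20b⟩ := h20
  obtain ⟨h21a, h21b⟩ := h21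
  obtain ⟨h22a, h22b⟩ := h22
  obtain ⟨h23a, h23b⟩ := h23
  rcases hsae with rfl | rfl <;>
    rcases hsa1 with rfl | rfl <;>
    rcases hsa2 with rfl | rfl <;>
    rcases hsa3 with rfl | rfl <;>
    rcases hsa12 with rfl | rfl <;>
    rcases hsa13 with rfl | rfl <;>
    rcases hsa23 with rfl | rfl <;>
    rcases hsa123 with rfl | rfl <;>
    first
      | exact ⟨by linarith, by linarith, by linarith⟩
      | (exfalso; revert hplus; norm_num)

theorem stmt14 (S : Matrix (Fin 4) (Fin (2 ^ 4)) ℝ) (hS : IsSauer S)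
    (htype1 : ∃ j, S 0 j = 1)
    (htype2 : ∀ i j, i ≠ 0 → S i j ≠ 1)
    (r : Fin 4 → ℝ) (hr : ∀ i, 0 ≤ r i ∧ r i < 1)
    (hsub : Totally1Submodular (shiftMat r S)) :
    r = ![0, 1/2, 1/2, 1/2] := by
  obtain ⟨hsgn, huniq⟩ := hS
  obtain ⟨j1, hj1⟩ := htype1
  -- r 0 = 0
  have hv1 := hsub 1 (emb1 (0 : Fin 4)) (emb1 j1)
  rw [Matrix.det_fin_one] at hv1
  simp only [Matrix.submatrix_apply, emb1, Function.Embedding.coeFn_mk,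
    Matrix.cons_val_zero, shiftMat, Matrix.of_apply, hj1] at hv1
  rw [abs_le] at hv1
  have hr0 : r 0 = 0 := le_antisymm (by linarith [hv1.2]) (hr 0).1
  obtain ⟨cze, hc_cze, hu_cze⟩ := huniq ({0} : Set (Fin 4))
  obtain ⟨cz1, hc_cz1, hu_cz1⟩ := huniq ({0, 1} : Set (Fin 4))
  obtain ⟨cz2, hc_cz2, hu_cz2⟩ := huniq ({0, 2} : Set (Fin 4))
  obtain ⟨cz3, hc_cz3, hu_cz3⟩ := huniq ({0, 3} : Set (Fin 4))
  obtain ⟨cz12, hc_cz12, hu_cz12⟩ := huniq ({0, 1, 2} : Set (Fin 4))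
  obtain ⟨cz13, hc_cz13, hu_cz13⟩ := huniq ({0, 1, 3} : Set (Fin 4))
  obtain ⟨cz23, hc_cz23, hu_cz23⟩ := huniq ({0, 2, 3} : Set (Fin 4))
  obtain ⟨cz123, hc_cz123, hu_cz123⟩ := huniq ({0, 1, 2, 3} : Set (Fin 4))
  obtain ⟨cfe, hc_cfe, hu_cfe⟩ := huniq (∅ : Set (Fin 4))
  obtain ⟨cf1, hc_cf1, hu_cf1⟩ := huniq ({1} : Set (Fin 4))
  obtain ⟨cf2, hc_cf2, hu_cf2⟩ := huniq ({2} : Set (Fin 4))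
  obtain ⟨cf3, hc_cf3, hu_cf3⟩ := huniq ({3} : Set (Fin 4))
  obtain ⟨cf12, hc_cf12, hu_cf12⟩ := huniq ({1, 2} : Set (Fin 4))
  obtain ⟨cf13, hc_cf13, hu_cf13⟩ := huniq ({1, 3} : Set (Fin 4))
  obtain ⟨cf23, hc_cf23, hu_cf23⟩ := huniq ({2, 3} : Set (Fin 4))
  have s_cze : S 0 cze = 1 ∨ S 0 cze = -1 := entry_sign hsgn hc_cze (by simp)
  have e_cze_1 : S 1 cze = 0 := entry_zero hc_cze (by simp)
  have e_cze_2 : S 2 cze = 0 := entry_zero hc_cze (by simp)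
  have e_cze_3 : S 3 cze = 0 := entry_zero hc_cze (by simp)
  have s_cz1 : S 0 cz1 = 1 ∨ S 0 cz1 = -1 := entry_sign hsgn hc_cz1 (by simp)
  have e_cz1_1 : S 1 cz1 = -1 := entry_neg hsgn htype2 hc_cz1 (by simp) (by decide)
  have e_cz1_2 : S 2 cz1 = 0 := entry_zero hc_cz1 (by simp)
  have e_cz1_3 : S 3 cz1 = 0 := entry_zero hc_cz1 (by simp)
  have s_cz2 : S 0 cz2 = 1 ∨ S 0 cz2 = -1 := entry_sign hsgn hc_cz2 (by simp)
  have e_cz2_1 : S 1 cz2 = 0 := entry_zero hc_cz2 (by simp)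
  have e_cz2_2 : S 2 cz2 = -1 := entry_neg hsgn htype2 hc_cz2 (by simp) (by decide)
  have e_cz2_3 : S 3 cz2 = 0 := entry_zero hc_cz2 (by simp)
  have s_cz3 : S 0 cz3 = 1 ∨ S 0 cz3 = -1 := entry_sign hsgn hc_cz3 (by simp)
  have e_cz3_1 : S 1 cz3 = 0 := entry_zero hc_cz3 (by simp)
  have e_cz3_2 : S 2 cz3 = 0 := entry_zero hc_cz3 (by simp)
  have e_cz3_3 : S 3 cz3 = -1 := entry_neg hsgn htype2 hc_cz3 (by simp) (by decide)
  have s_cz12 : S 0 cz12 = 1 ∨ S 0 cz12 = -1 := entry_sign hsgn hc_cz12 (by simp)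
  have e_cz12_1 : S 1 cz12 = -1 := entry_neg hsgn htype2 hc_cz12 (by simp) (by decide)
  have e_cz12_2 : S 2 cz12 = -1 := entry_neg hsgn htype2 hc_cz12 (by simp) (by decide)
  have e_cz12_3 : S 3 cz12 = 0 := entry_zero hc_cz12 (by simp)
  have s_cz13 : S 0 cz13 = 1 ∨ S 0 cz13 = -1 := entry_sign hsgn hc_cz13 (by simp)
  have e_cz13_1 : S 1 cz13 = -1 := entry_neg hsgn htype2 hc_cz13 (by simp) (by decide)
  have e_cz13_2 : S 2 cz13 = 0 := entry_zero hc_cz13 (by simp)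
  have e_cz13_3 : S 3 cz13 = -1 := entry_neg hsgn htype2 hc_cz13 (by simp) (by decide)
  have s_cz23 : S 0 cz23 = 1 ∨ S 0 cz23 = -1 := entry_sign hsgn hc_cz23 (by simp)
  have e_cz23_1 : S 1 cz23 = 0 := entry_zero hc_cz23 (by simp)
  have e_cz23_2 : S 2 cz23 = -1 := entry_neg hsgn htype2 hc_cz23 (by simp) (by decide)
  have e_cz23_3 : S 3 cz23 = -1 := entry_neg hsgn htype2 hc_cz23 (by simp) (by decide)
  have s_cz123 : S 0 cz123 = 1 ∨ S 0 cz123 = -1 := entry_sign hsgn hc_cz123 (by simp)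
  have e_cz123_1 : S 1 cz123 = -1 := entry_neg hsgn htype2 hc_cz123 (by simp) (by decide)
  have e_cz123_2 : S 2 cz123 = -1 := entry_neg hsgn htype2 hc_cz123 (by simp) (by decide)
  have e_cz123_3 : S 3 cz123 = -1 := entry_neg hsgn htype2 hc_cz123 (by simp) (by decide)
  have e_cfe_0 : S 0 cfe = 0 := entry_zero hc_cfe (by simp)
  have e_cfe_1 : S 1 cfe = 0 := entry_zero hc_cfe (by simp)
  have e_cfe_2 : S 2 cfe = 0 := entry_zero hc_cfe (by simp)
  have e_cfe_3 : S 3 cfe = 0 := entry_zero hc_cfe (by simp)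
  have e_cf1_0 : S 0 cf1 = 0 := entry_zero hc_cf1 (by simp)
  have e_cf1_1 : S 1 cf1 = -1 := entry_neg hsgn htype2 hc_cf1 (by simp) (by decide)
  have e_cf1_2 : S 2 cf1 = 0 := entry_zero hc_cf1 (by simp)
  have e_cf1_3 : S 3 cf1 = 0 := entry_zero hc_cf1 (by simp)
  have e_cf2_0 : S 0 cf2 = 0 := entry_zero hc_cf2 (by simp)
  have e_cf2_1 : S 1 cf2 = 0 := entry_zero hc_cf2 (by simp)
  have e_cf2_2 : S 2 cf2 = -1 := entry_neg hsgn htype2 hc_cf2 (by simp) (by decide)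
  have e_cf2_3 : S 3 cf2 = 0 := entry_zero hc_cf2 (by simp)
  have e_cf3_0 : S 0 cf3 = 0 := entry_zero hc_cf3 (by simp)
  have e_cf3_1 : S 1 cf3 = 0 := entry_zero hc_cf3 (by simp)
  have e_cf3_2 : S 2 cf3 = 0 := entry_zero hc_cf3 (by simp)
  have e_cf3_3 : S 3 cf3 = -1 := entry_neg hsgn htype2 hc_cf3 (by simp) (by decide)
  have e_cf12_0 : S 0 cf12 = 0 := entry_zero hc_cf12 (by simp)
  have e_cf12_1 : S 1 cf12 = -1 := entry_neg hsgn htype2 hc_cf12 (by simp) (by decide)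
  have e_cf12_2 : S 2 cf12 = -1 := entry_neg hsgn htype2 hc_cf12 (by simp) (by decide)
  have e_cf12_3 : S 3 cf12 = 0 := entry_zero hc_cf12 (by simp)
  have e_cf13_0 : S 0 cf13 = 0 := entry_zero hc_cf13 (by simp)
  have e_cf13_1 : S 1 cf13 = -1 := entry_neg hsgn htype2 hc_cf13 (by simp) (by decide)
  have e_cf13_2 : S 2 cf13 = 0 := entry_zero hc_cf13 (by simp)
  have e_cf13_3 : S 3 cf13 = -1 := entry_neg hsgn htype2 hc_cf13 (by simp) (by decide)
  have e_cf23_0 : S 0 cf23 = 0 := entry_zero hc_cf23 (by simp)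
  have e_cf23_1 : S 1 cf23 = 0 := entry_zero hc_cf23 (by simp)
  have e_cf23_2 : S 2 cf23 = -1 := entry_neg hsgn htype2 hc_cf23 (by simp) (by decide)
  have e_cf23_3 : S 3 cf23 = -1 := entry_neg hsgn htype2 hc_cf23 (by simp) (by decide)
  have ne_cf1_cf2 : cf1 ≠ cf2 := col_ne hc_cf1 hc_cf2 (by intro h; rw [Set.ext_iff] at h; have := h 1; simp at this)
  have ne_cf1_cf3 : cf1 ≠ cf3 := col_ne hc_cf1 hc_cf3 (by intro h; rw [Set.ext_iff] at h; have := h 1; simp at this)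
  have ne_cf12_cf13 : cf12 ≠ cf13 := col_ne hc_cf12 hc_cf13 (by intro h; rw [Set.ext_iff] at h; have := h 2; simp at this)
  have ne_cf12_cf23 : cf12 ≠ cf23 := col_ne hc_cf12 hc_cf23 (by intro h; rw [Set.ext_iff] at h; have := h 1; simp at this)
  have ne_cf13_cf23 : cf13 ≠ cf23 := col_ne hc_cf13 hc_cf23 (by intro h; rw [Set.ext_iff] at h; have := h 1; simp at this)
  have ne_cf2_cf3 : cf2 ≠ cf3 := col_ne hc_cf2 hc_cf3 (by intro h; rw [Set.ext_iff] at h; have := h 2; simp at this)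
  have ne_cz1_cf12 : cz1 ≠ cf12 := col_ne hc_cz1 hc_cf12 (by intro h; rw [Set.ext_iff] at h; have := h 0; simp at this)
  have ne_cz1_cf13 : cz1 ≠ cf13 := col_ne hc_cz1 hc_cf13 (by intro h; rw [Set.ext_iff] at h; have := h 0; simp at this)
  have ne_cz1_cf2 : cz1 ≠ cf2 := col_ne hc_cz1 hc_cf2 (by intro h; rw [Set.ext_iff] at h; have := h 0; simp at this)
  have ne_cz1_cf3 : cz1 ≠ cf3 := col_ne hc_cz1 hc_cf3 (by intro h; rw [Set.ext_iff] at h; have := h 0; simp at this)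
  have ne_cz1_cz12 : cz1 ≠ cz12 := col_ne hc_cz1 hc_cz12 (by intro h; rw [Set.ext_iff] at h; have := h 2; simp at this)
  have ne_cz1_cz123 : cz1 ≠ cz123 := col_ne hc_cz1 hc_cz123 (by intro h; rw [Set.ext_iff] at h; have := h 2; simp at this)
  have ne_cz1_cz2 : cz1 ≠ cz2 := col_ne hc_cz1 hc_cz2 (by intro h; rw [Set.ext_iff] at h; have := h 1; simp at this)
  have ne_cz1_cz3 : cz1 ≠ cz3 := col_ne hc_cz1 hc_cz3 (by intro h; rw [Set.ext_iff] at h; have := h 1; simp at this)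
  have ne_cz12_cf1 : cz12 ≠ cf1 := col_ne hc_cz12 hc_cf1 (by intro h; rw [Set.ext_iff] at h; have := h 0; simp at this)
  have ne_cz12_cf13 : cz12 ≠ cf13 := col_ne hc_cz12 hc_cf13 (by intro h; rw [Set.ext_iff] at h; have := h 0; simp at this)
  have ne_cz12_cf2 : cz12 ≠ cf2 := col_ne hc_cz12 hc_cf2 (by intro h; rw [Set.ext_iff] at h; have := h 0; simp at this)
  have ne_cz12_cf23 : cz12 ≠ cf23 := col_ne hc_cz12 hc_cf23 (by intro h; rw [Set.ext_iff] at h; have := h 0; simp at this)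
  have ne_cz12_cfe : cz12 ≠ cfe := col_ne hc_cz12 hc_cfe (by intro h; rw [Set.ext_iff] at h; have := h 0; simp at this)
  have ne_cz12_cz123 : cz12 ≠ cz123 := col_ne hc_cz12 hc_cz123 (by intro h; rw [Set.ext_iff] at h; have := h 3; simp at this)
  have ne_cz12_cz13 : cz12 ≠ cz13 := col_ne hc_cz12 hc_cz13 (by intro h; rw [Set.ext_iff] at h; have := h 2; simp at this)
  have ne_cz12_cz23 : cz12 ≠ cz23 := col_ne hc_cz12 hc_cz23 (by intro h; rw [Set.ext_iff] at h; have := h 1; simp at this)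
  have ne_cz123_cf1 : cz123 ≠ cf1 := col_ne hc_cz123 hc_cf1 (by intro h; rw [Set.ext_iff] at h; have := h 0; simp at this)
  have ne_cz123_cf12 : cz123 ≠ cf12 := col_ne hc_cz123 hc_cf12 (by intro h; rw [Set.ext_iff] at h; have := h 0; simp at this)
  have ne_cz123_cf13 : cz123 ≠ cf13 := col_ne hc_cz123 hc_cf13 (by intro h; rw [Set.ext_iff] at h; have := h 0; simp at this)
  have ne_cz123_cf2 : cz123 ≠ cf2 := col_ne hc_cz123 hc_cf2 (by intro h; rw [Set.ext_iff] at h; have := h 0; simp at this)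
  have ne_cz123_cf23 : cz123 ≠ cf23 := col_ne hc_cz123 hc_cf23 (by intro h; rw [Set.ext_iff] at h; have := h 0; simp at this)
  have ne_cz123_cf3 : cz123 ≠ cf3 := col_ne hc_cz123 hc_cf3 (by intro h; rw [Set.ext_iff] at h; have := h 0; simp at this)
  have ne_cz13_cf1 : cz13 ≠ cf1 := col_ne hc_cz13 hc_cf1 (by intro h; rw [Set.ext_iff] at h; have := h 0; simp at this)
  have ne_cz13_cf12 : cz13 ≠ cf12 := col_ne hc_cz13 hc_cf12 (by intro h; rw [Set.ext_iff] at h; have := h 0; simp at this)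
  have ne_cz13_cf23 : cz13 ≠ cf23 := col_ne hc_cz13 hc_cf23 (by intro h; rw [Set.ext_iff] at h; have := h 0; simp at this)
  have ne_cz13_cf3 : cz13 ≠ cf3 := col_ne hc_cz13 hc_cf3 (by intro h; rw [Set.ext_iff] at h; have := h 0; simp at this)
  have ne_cz13_cfe : cz13 ≠ cfe := col_ne hc_cz13 hc_cfe (by intro h; rw [Set.ext_iff] at h; have := h 0; simp at this)
  have ne_cz13_cz123 : cz13 ≠ cz123 := col_ne hc_cz13 hc_cz123 (by intro h; rw [Set.ext_iff] at h; have := h 2; simp at this)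
  have ne_cz13_cz23 : cz13 ≠ cz23 := col_ne hc_cz13 hc_cz23 (by intro h; rw [Set.ext_iff] at h; have := h 1; simp at this)
  have ne_cz2_cf1 : cz2 ≠ cf1 := col_ne hc_cz2 hc_cf1 (by intro h; rw [Set.ext_iff] at h; have := h 0; simp at this)
  have ne_cz2_cf12 : cz2 ≠ cf12 := col_ne hc_cz2 hc_cf12 (by intro h; rw [Set.ext_iff] at h; have := h 0; simp at this)
  have ne_cz2_cf23 : cz2 ≠ cf23 := col_ne hc_cz2 hc_cf23 (by intro h; rw [Set.ext_iff] at h; have := h 0; simp at this)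
  have ne_cz2_cf3 : cz2 ≠ cf3 := col_ne hc_cz2 hc_cf3 (by intro h; rw [Set.ext_iff] at h; have := h 0; simp at this)
  have ne_cz2_cfe : cz2 ≠ cfe := col_ne hc_cz2 hc_cfe (by intro h; rw [Set.ext_iff] at h; have := h 0; simp at this)
  have ne_cz2_cz12 : cz2 ≠ cz12 := col_ne hc_cz2 hc_cz12 (by intro h; rw [Set.ext_iff] at h; have := h 1; simp at this)
  have ne_cz2_cz123 : cz2 ≠ cz123 := col_ne hc_cz2 hc_cz123 (by intro h; rw [Set.ext_iff] at h; have := h 1; simp at this)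
  have ne_cz2_cz3 : cz2 ≠ cz3 := col_ne hc_cz2 hc_cz3 (by intro h; rw [Set.ext_iff] at h; have := h 2; simp at this)
  have ne_cz23_cf12 : cz23 ≠ cf12 := col_ne hc_cz23 hc_cf12 (by intro h; rw [Set.ext_iff] at h; have := h 0; simp at this)
  have ne_cz23_cf13 : cz23 ≠ cf13 := col_ne hc_cz23 hc_cf13 (by intro h; rw [Set.ext_iff] at h; have := h 0; simp at this)
  have ne_cz23_cf2 : cz23 ≠ cf2 := col_ne hc_cz23 hc_cf2 (by intro h; rw [Set.ext_iff] at h; have := h 0; simp at this)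
  have ne_cz23_cf3 : cz23 ≠ cf3 := col_ne hc_cz23 hc_cf3 (by intro h; rw [Set.ext_iff] at h; have := h 0; simp at this)
  have ne_cz23_cfe : cz23 ≠ cfe := col_ne hc_cz23 hc_cfe (by intro h; rw [Set.ext_iff] at h; have := h 0; simp at this)
  have ne_cz23_cz123 : cz23 ≠ cz123 := col_ne hc_cz23 hc_cz123 (by intro h; rw [Set.ext_iff] at h; have := h 1; simp at this)
  have ne_cz3_cf1 : cz3 ≠ cf1 := col_ne hc_cz3 hc_cf1 (by intro h; rw [Set.ext_iff] at h; have := h 0; simp at this)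
  have ne_cz3_cf13 : cz3 ≠ cf13 := col_ne hc_cz3 hc_cf13 (by intro h; rw [Set.ext_iff] at h; have := h 0; simp at this)
  have ne_cz3_cf2 : cz3 ≠ cf2 := col_ne hc_cz3 hc_cf2 (by intro h; rw [Set.ext_iff] at h; have := h 0; simp at this)
  have ne_cz3_cf23 : cz3 ≠ cf23 := col_ne hc_cz3 hc_cf23 (by intro h; rw [Set.ext_iff] at h; have := h 0; simp at this)
  have ne_cz3_cfe : cz3 ≠ cfe := col_ne hc_cz3 hc_cfe (by intro h; rw [Set.ext_iff] at h; have := h 0; simp at this)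
  have ne_cz3_cz123 : cz3 ≠ cz123 := col_ne hc_cz3 hc_cz123 (by intro h; rw [Set.ext_iff] at h; have := h 1; simp at this)
  have ne_cz3_cz13 : cz3 ≠ cz13 := col_ne hc_cz3 hc_cz13 (by intro h; rw [Set.ext_iff] at h; have := h 1; simp at this)
  have ne_cz3_cz23 : cz3 ≠ cz23 := col_ne hc_cz3 hc_cz23 (by intro h; rw [Set.ext_iff] at h; have := h 2; simp at this)
  have ne_cze_cf1 : cze ≠ cf1 := col_ne hc_cze hc_cf1 (by intro h; rw [Set.ext_iff] at h; have := h 0; simp at this)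
  have ne_cze_cf12 : cze ≠ cf12 := col_ne hc_cze hc_cf12 (by intro h; rw [Set.ext_iff] at h; have := h 0; simp at this)
  have ne_cze_cf13 : cze ≠ cf13 := col_ne hc_cze hc_cf13 (by intro h; rw [Set.ext_iff] at h; have := h 0; simp at this)
  have ne_cze_cf2 : cze ≠ cf2 := col_ne hc_cze hc_cf2 (by intro h; rw [Set.ext_iff] at h; have := h 0; simp at this)
  have ne_cze_cf23 : cze ≠ cf23 := col_ne hc_cze hc_cf23 (by intro h; rw [Set.ext_iff] at h; have := h 0; simp at this)
  have ne_cze_cf3 : cze ≠ cf3 := col_ne hc_cze hc_cf3 (by intro h; rw [Set.ext_iff] at h; have := h 0; simp at this)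
  have ne_cze_cz1 : cze ≠ cz1 := col_ne hc_cze hc_cz1 (by intro h; rw [Set.ext_iff] at h; have := h 1; simp at this)
  have ne_cze_cz12 : cze ≠ cz12 := col_ne hc_cze hc_cz12 (by intro h; rw [Set.ext_iff] at h; have := h 1; simp at this)
  have ne_cze_cz13 : cze ≠ cz13 := col_ne hc_cze hc_cz13 (by intro h; rw [Set.ext_iff] at h; have := h 1; simp at this)
  have ne_cze_cz2 : cze ≠ cz2 := col_ne hc_cze hc_cz2 (by intro h; rw [Set.ext_iff] at h; have := h 2; simp at this)
  have ne_cze_cz23 : cze ≠ cz23 := col_ne hc_cze hc_cz23 (by intro h; rw [Set.ext_iff] at h; have := h 2; simp at this)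
  have ne_cze_cz3 : cze ≠ cz3 := col_ne hc_cze hc_cz3 (by intro h; rw [Set.ext_iff] at h; have := h 3; simp at this)
  have hplus : S 0 cze = 1 ∨ S 0 cz1 = 1 ∨ S 0 cz2 = 1 ∨ S 0 cz3 = 1 ∨ S 0 cz12 = 1 ∨ S 0 cz13 = 1 ∨ S 0 cz23 = 1 ∨ S 0 cz123 = 1 := by
    by_cases h1 : S 1 j1 = 0 <;> by_cases h2 : S 2 j1 = 0 <;> by_cases h3 : S 3 j1 = 0
    · have e : j1 = cze := hu_cze j1 (by intro i; fin_cases i <;> simp [hj1, h1, h2, h3])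
      have h : S 0 cze = 1 := e ▸ hj1
      exact Or.inl h
    · have e : j1 = cz3 := hu_cz3 j1 (by intro i; fin_cases i <;> simp [hj1, h1, h2, h3])
      have h : S 0 cz3 = 1 := e ▸ hj1
      exact Or.inr (Or.inr (Or.inr (Or.inl h)))
    · have e : j1 = cz2 := hu_cz2 j1 (by intro i; fin_cases i <;> simp [hj1, h1, h2, h3])
      have h : S 0 cz2 = 1 := e ▸ hj1
      exact Or.inr (Or.inr (Or.inl h))
    · have e : j1 = cz23 := hu_cz23 j1 (by intro i; fin_cases i <;> simp [hj1, h1, h2, h3])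
      have h : S 0 cz23 = 1 := e ▸ hj1
      exact Or.inr (Or.inr (Or.inr (Or.inr (Or.inr (Or.inr (Or.inl h))))))
    · have e : j1 = cz1 := hu_cz1 j1 (by intro i; fin_cases i <;> simp [hj1, h1, h2, h3])
      have h : S 0 cz1 = 1 := e ▸ hj1
      exact Or.inr (Or.inl h)
    · have e : j1 = cz13 := hu_cz13 j1 (by intro i; fin_cases i <;> simp [hj1, h1, h2, h3])
      have h : S 0 cz13 = 1 := e ▸ hj1
      exact Or.inr (Or.inr (Or.inr (Or.inr (Or.inr (Or.inl h)))))
    · have e : j1 = cz12 := hu_cz12 j1 (by intro i; fin_cases i <;> simp [hj1, h1, h2, h3])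
      have h : S 0 cz12 = 1 := e ▸ hj1
      exact Or.inr (Or.inr (Or.inr (Or.inr (Or.inl h))))
    · have e : j1 = cz123 := hu_cz123 j1 (by intro i; fin_cases i <;> simp [hj1, h1, h2, h3])
      have h : S 0 cz123 = 1 := e ▸ hj1
      exact Or.inr (Or.inr (Or.inr (Or.inr (Or.inr (Or.inr (Or.inr (h)))))))
  have hd0 : ((shiftMat r S).submatrix (emb3 (0 : Fin 4) 1 2 (by decide) (by decide) (by decide)) (emb3 cz12 cz123 cf1 ne_cz12_cz123 ne_cz12_cf1 ne_cz123_cf1)).det = (-1:ℝ) * S 0 cz12 + S 0 cz12 * r 1 + S 0 cz123 + (-1:ℝ) * S 0 cz123 * r 1 := by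
    rw [Matrix.det_fin_three]
    simp only [Matrix.submatrix_apply, emb3, emb4, Function.Embedding.coeFn_mk,
      Matrix.cons_val_zero, Matrix.cons_val_one, Matrix.head_cons, Matrix.cons_val_two,
      Matrix.tail_cons, Matrix.cons_val_three, shiftMat, Matrix.of_apply, hr0, e_cz12_1, e_cz12_2, e_cz123_1, e_cz123_2, e_cf1_0, e_cf1_1, e_cf1_2]
    ring
  have hM0 : |(-1:ℝ) * S 0 cz12 + S 0 cz12 * r 1 + S 0 cz123 + (-1:ℝ) * S 0 cz123 * r 1| ≤ 1 := by
    have h := hsub 3 (emb3 (0 : Fin 4) 1 2 (by decide) (by decide) (by decide)) (emb3 cz12 cz123 cf1 ne_cz12_cz123 ne_cz12_cf1 ne_cz123_cf1)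
    rw [hd0] at h; exact h
  have hd1 : ((shiftMat r S).submatrix (emb3 (0 : Fin 4) 1 2 (by decide) (by decide) (by decide)) (emb3 cz12 cz123 cf2 ne_cz12_cz123 ne_cz12_cf2 ne_cz123_cf2)).det = S 0 cz12 + (-1:ℝ) * S 0 cz12 * r 2 + (-1:ℝ) * S 0 cz123 + S 0 cz123 * r 2 := by
    rw [Matrix.det_fin_three]
    simp only [Matrix.submatrix_apply, emb3, emb4, Function.Embedding.coeFn_mk,
      Matrix.cons_val_zero, Matrix.cons_val_one, Matrix.head_cons, Matrix.cons_val_two,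
      Matrix.tail_cons, Matrix.cons_val_three, shiftMat, Matrix.of_apply, hr0, e_cz12_1, e_cz12_2, e_cz123_1, e_cz123_2, e_cf2_0, e_cf2_1, e_cf2_2]
    ring
  have hM1 : |S 0 cz12 + (-1:ℝ) * S 0 cz12 * r 2 + (-1:ℝ) * S 0 cz123 + S 0 cz123 * r 2| ≤ 1 := by
    have h := hsub 3 (emb3 (0 : Fin 4) 1 2 (by decide) (by decide) (by decide)) (emb3 cz12 cz123 cf2 ne_cz12_cz123 ne_cz12_cf2 ne_cz123_cf2)
    rw [hd1] at h; exact h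
  have hd2 : ((shiftMat r S).submatrix (emb3 (0 : Fin 4) 1 3 (by decide) (by decide) (by decide)) (emb3 cz1 cz12 cf13 ne_cz1_cz12 ne_cz1_cf13 ne_cz12_cf13)).det = S 0 cz1 + (-1:ℝ) * S 0 cz1 * r 1 + (-1:ℝ) * S 0 cz12 + S 0 cz12 * r 1 := by
    rw [Matrix.det_fin_three]
    simp only [Matrix.submatrix_apply, emb3, emb4, Function.Embedding.coeFn_mk,
      Matrix.cons_val_zero, Matrix.cons_val_one, Matrix.head_cons, Matrix.cons_val_two,
      Matrix.tail_cons, Matrix.cons_val_three, shiftMat, Matrix.of_apply, hr0, e_cz1_1, e_cz1_3, e_cz12_1, e_cz12_3, e_cf13_0, e_cf13_1, e_cf13_3]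
    ring
  have hM2 : |S 0 cz1 + (-1:ℝ) * S 0 cz1 * r 1 + (-1:ℝ) * S 0 cz12 + S 0 cz12 * r 1| ≤ 1 := by
    have h := hsub 3 (emb3 (0 : Fin 4) 1 3 (by decide) (by decide) (by decide)) (emb3 cz1 cz12 cf13 ne_cz1_cz12 ne_cz1_cf13 ne_cz12_cf13)
    rw [hd2] at h; exact h
  have hd3 : ((shiftMat r S).submatrix (emb3 (0 : Fin 4) 1 3 (by decide) (by decide) (by decide)) (emb3 cz3 cz23 cfe ne_cz3_cz23 ne_cz3_cfe ne_cz23_cfe)).det = (-1:ℝ) * S 0 cz23 * r 1 + S 0 cz3 * r 1 := by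
    rw [Matrix.det_fin_three]
    simp only [Matrix.submatrix_apply, emb3, emb4, Function.Embedding.coeFn_mk,
      Matrix.cons_val_zero, Matrix.cons_val_one, Matrix.head_cons, Matrix.cons_val_two,
      Matrix.tail_cons, Matrix.cons_val_three, shiftMat, Matrix.of_apply, hr0, e_cz3_1, e_cz3_3, e_cz23_1, e_cz23_3, e_cfe_0, e_cfe_1, e_cfe_3]
    ring
  have hM3 : |(-1:ℝ) * S 0 cz23 * r 1 + S 0 cz3 * r 1| ≤ 1 := by
    have h := hsub 3 (emb3 (0 : Fin 4) 1 3 (by decide) (by decide) (by decide)) (emb3 cz3 cz23 cfe ne_cz3_cz23 ne_cz3_cfe ne_cz23_cfe)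
    rw [hd3] at h; exact h
  have hd4 : ((shiftMat r S).submatrix (emb3 (0 : Fin 4) 2 3 (by decide) (by decide) (by decide)) (emb3 cz2 cz12 cfe ne_cz2_cz12 ne_cz2_cfe ne_cz12_cfe)).det = S 0 cz12 * r 3 + (-1:ℝ) * S 0 cz2 * r 3 := by
    rw [Matrix.det_fin_three]
    simp only [Matrix.submatrix_apply, emb3, emb4, Function.Embedding.coeFn_mk,
      Matrix.cons_val_zero, Matrix.cons_val_one, Matrix.head_cons, Matrix.cons_val_two,
      Matrix.tail_cons, Matrix.cons_val_three, shiftMat, Matrix.of_apply, hr0, e_cz2_2, e_cz2_3, e_cz12_2, e_cz12_3, e_cfe_0, e_cfe_2, e_cfe_3]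
    ring
  have hM4 : |S 0 cz12 * r 3 + (-1:ℝ) * S 0 cz2 * r 3| ≤ 1 := by
    have h := hsub 3 (emb3 (0 : Fin 4) 2 3 (by decide) (by decide) (by decide)) (emb3 cz2 cz12 cfe ne_cz2_cz12 ne_cz2_cfe ne_cz12_cfe)
    rw [hd4] at h; exact h
  have hd5 : ((shiftMat r S).submatrix (emb3 (0 : Fin 4) 2 3 (by decide) (by decide) (by decide)) (emb3 cz2 cz12 cf23 ne_cz2_cz12 ne_cz2_cf23 ne_cz12_cf23)).det = (-1:ℝ) * S 0 cz12 + S 0 cz12 * r 2 + S 0 cz2 + (-1:ℝ) * S 0 cz2 * r 2 := by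
    rw [Matrix.det_fin_three]
    simp only [Matrix.submatrix_apply, emb3, emb4, Function.Embedding.coeFn_mk,
      Matrix.cons_val_zero, Matrix.cons_val_one, Matrix.head_cons, Matrix.cons_val_two,
      Matrix.tail_cons, Matrix.cons_val_three, shiftMat, Matrix.of_apply, hr0, e_cz2_2, e_cz2_3, e_cz12_2, e_cz12_3, e_cf23_0, e_cf23_2, e_cf23_3]
    ring
  have hM5 : |(-1:ℝ) * S 0 cz12 + S 0 cz12 * r 2 + S 0 cz2 + (-1:ℝ) * S 0 cz2 * r 2| ≤ 1 := by
    have h := hsub 3 (emb3 (0 : Fin 4) 2 3 (by decide) (by decide) (by decide)) (emb3 cz2 cz12 cf23 ne_cz2_cz12 ne_cz2_cf23 ne_cz12_cf23)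
    rw [hd5] at h; exact h
  have hd6 : ((shiftMat r S).submatrix (emb3 (0 : Fin 4) 2 3 (by decide) (by decide) (by decide)) (emb3 cz3 cz13 cfe ne_cz3_cz13 ne_cz3_cfe ne_cz13_cfe)).det = (-1:ℝ) * S 0 cz13 * r 2 + S 0 cz3 * r 2 := by
    rw [Matrix.det_fin_three]
    simp only [Matrix.submatrix_apply, emb3, emb4, Function.Embedding.coeFn_mk,
      Matrix.cons_val_zero, Matrix.cons_val_one, Matrix.head_cons, Matrix.cons_val_two,
      Matrix.tail_cons, Matrix.cons_val_three, shiftMat, Matrix.of_apply, hr0, e_cz3_2, e_cz3_3, e_cz13_2, e_cz13_3, e_cfe_0, e_cfe_2, e_cfe_3]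
    ring
  have hM6 : |(-1:ℝ) * S 0 cz13 * r 2 + S 0 cz3 * r 2| ≤ 1 := by
    have h := hsub 3 (emb3 (0 : Fin 4) 2 3 (by decide) (by decide) (by decide)) (emb3 cz3 cz13 cfe ne_cz3_cz13 ne_cz3_cfe ne_cz13_cfe)
    rw [hd6] at h; exact h
  have hd7 : ((shiftMat r S).submatrix (emb3 (0 : Fin 4) 2 3 (by decide) (by decide) (by decide)) (emb3 cz3 cz13 cf23 ne_cz3_cz13 ne_cz3_cf23 ne_cz13_cf23)).det = S 0 cz13 + (-1:ℝ) * S 0 cz13 * r 3 + (-1:ℝ) * S 0 cz3 + S 0 cz3 * r 3 := by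
    rw [Matrix.det_fin_three]
    simp only [Matrix.submatrix_apply, emb3, emb4, Function.Embedding.coeFn_mk,
      Matrix.cons_val_zero, Matrix.cons_val_one, Matrix.head_cons, Matrix.cons_val_two,
      Matrix.tail_cons, Matrix.cons_val_three, shiftMat, Matrix.of_apply, hr0, e_cz3_2, e_cz3_3, e_cz13_2, e_cz13_3, e_cf23_0, e_cf23_2, e_cf23_3]
    ring
  have hM7 : |S 0 cz13 + (-1:ℝ) * S 0 cz13 * r 3 + (-1:ℝ) * S 0 cz3 + S 0 cz3 * r 3| ≤ 1 := by
    have h := hsub 3 (emb3 (0 : Fin 4) 2 3 (by decide) (by decide) (by decide)) (emb3 cz3 cz13 cf23 ne_cz3_cz13 ne_cz3_cf23 ne_cz13_cf23)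
    rw [hd7] at h; exact h
  have hd8 : ((shiftMat r S).submatrix (emb3 (0 : Fin 4) 2 3 (by decide) (by decide) (by decide)) (emb3 cz23 cz123 cf2 ne_cz23_cz123 ne_cz23_cf2 ne_cz123_cf2)).det = S 0 cz123 + (-1:ℝ) * S 0 cz123 * r 2 + (-1:ℝ) * S 0 cz23 + S 0 cz23 * r 2 := by
    rw [Matrix.det_fin_three]
    simp only [Matrix.submatrix_apply, emb3, emb4, Function.Embedding.coeFn_mk,
      Matrix.cons_val_zero, Matrix.cons_val_one, Matrix.head_cons, Matrix.cons_val_two,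
      Matrix.tail_cons, Matrix.cons_val_three, shiftMat, Matrix.of_apply, hr0, e_cz23_2, e_cz23_3, e_cz123_2, e_cz123_3, e_cf2_0, e_cf2_2, e_cf2_3]
    ring
  have hM8 : |S 0 cz123 + (-1:ℝ) * S 0 cz123 * r 2 + (-1:ℝ) * S 0 cz23 + S 0 cz23 * r 2| ≤ 1 := by
    have h := hsub 3 (emb3 (0 : Fin 4) 2 3 (by decide) (by decide) (by decide)) (emb3 cz23 cz123 cf2 ne_cz23_cz123 ne_cz23_cf2 ne_cz123_cf2)
    rw [hd8] at h; exact h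
  have hd9 : ((shiftMat r S).submatrix (emb3 (0 : Fin 4) 2 3 (by decide) (by decide) (by decide)) (emb3 cz23 cz123 cf3 ne_cz23_cz123 ne_cz23_cf3 ne_cz123_cf3)).det = (-1:ℝ) * S 0 cz123 + S 0 cz123 * r 3 + S 0 cz23 + (-1:ℝ) * S 0 cz23 * r 3 := by
    rw [Matrix.det_fin_three]
    simp only [Matrix.submatrix_apply, emb3, emb4, Function.Embedding.coeFn_mk,
      Matrix.cons_val_zero, Matrix.cons_val_one, Matrix.head_cons, Matrix.cons_val_two,
      Matrix.tail_cons, Matrix.cons_val_three, shiftMat, Matrix.of_apply, hr0, e_cz23_2, e_cz23_3, e_cz123_2, e_cz123_3, e_cf3_0, e_cf3_2, e_cf3_3]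
    ring
  have hM9 : |(-1:ℝ) * S 0 cz123 + S 0 cz123 * r 3 + S 0 cz23 + (-1:ℝ) * S 0 cz23 * r 3| ≤ 1 := by
    have h := hsub 3 (emb3 (0 : Fin 4) 2 3 (by decide) (by decide) (by decide)) (emb3 cz23 cz123 cf3 ne_cz23_cz123 ne_cz23_cf3 ne_cz123_cf3)
    rw [hd9] at h; exact h
  have hd10 : ((shiftMat r S).submatrix (emb4 (0 : Fin 4) 1 2 3 (by decide) (by decide) (by decide) (by decide) (by decide) (by decide)) (emb4 cze cz3 cf1 cf2 ne_cze_cz3 ne_cze_cf1 ne_cze_cf2 ne_cz3_cf1 ne_cz3_cf2 ne_cf1_cf2)).det = (-1:ℝ) * S 0 cz3 * r 3 + (-1:ℝ) * S 0 cze + S 0 cze * r 1 + S 0 cze * r 2 + S 0 cze * r 3 := by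
    rw [det_fin_four]
    simp only [Matrix.submatrix_apply, emb3, emb4, Function.Embedding.coeFn_mk,
      Matrix.cons_val_zero, Matrix.cons_val_one, Matrix.head_cons, Matrix.cons_val_two,
      Matrix.tail_cons, Matrix.cons_val_three, shiftMat, Matrix.of_apply, hr0, e_cze_1, e_cze_2, e_cze_3, e_cz3_1, e_cz3_2, e_cz3_3, e_cf1_0, e_cf1_1, e_cf1_2, e_cf1_3, e_cf2_0, e_cf2_1, e_cf2_2, e_cf2_3]
    ring
  have hM10 : |(-1:ℝ) * S 0 cz3 * r 3 + (-1:ℝ) * S 0 cze + S 0 cze * r 1 + S 0 cze * r 2 + S 0 cze * r 3| ≤ 1 := by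
    have h := hsub 4 (emb4 (0 : Fin 4) 1 2 3 (by decide) (by decide) (by decide) (by decide) (by decide) (by decide)) (emb4 cze cz3 cf1 cf2 ne_cze_cz3 ne_cze_cf1 ne_cze_cf2 ne_cz3_cf1 ne_cz3_cf2 ne_cf1_cf2)
    rw [hd10] at h; exact h
  have hd11 : ((shiftMat r S).submatrix (emb4 (0 : Fin 4) 1 2 3 (by decide) (by decide) (by decide) (by decide) (by decide) (by decide)) (emb4 cze cz3 cf13 cf23 ne_cze_cz3 ne_cze_cf13 ne_cze_cf23 ne_cz3_cf13 ne_cz3_cf23 ne_cf13_cf23)).det = S 0 cz3 * r 1 + S 0 cz3 * r 2 + (-1:ℝ) * S 0 cz3 * r 3 + (-1:ℝ) * S 0 cze + S 0 cze * r 3 := by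
    rw [det_fin_four]
    simp only [Matrix.submatrix_apply, emb3, emb4, Function.Embedding.coeFn_mk,
      Matrix.cons_val_zero, Matrix.cons_val_one, Matrix.head_cons, Matrix.cons_val_two,
      Matrix.tail_cons, Matrix.cons_val_three, shiftMat, Matrix.of_apply, hr0, e_cze_1, e_cze_2, e_cze_3, e_cz3_1, e_cz3_2, e_cz3_3, e_cf13_0, e_cf13_1, e_cf13_2, e_cf13_3, e_cf23_0, e_cf23_1, e_cf23_2, e_cf23_3]
    ring
  have hM11 : |S 0 cz3 * r 1 + S 0 cz3 * r 2 + (-1:ℝ) * S 0 cz3 * r 3 + (-1:ℝ) * S 0 cze + S 0 cze * r 3| ≤ 1 := by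
    have h := hsub 4 (emb4 (0 : Fin 4) 1 2 3 (by decide) (by decide) (by decide) (by decide) (by decide) (by decide)) (emb4 cze cz3 cf13 cf23 ne_cze_cz3 ne_cze_cf13 ne_cze_cf23 ne_cz3_cf13 ne_cz3_cf23 ne_cf13_cf23)
    rw [hd11] at h; exact h
  have hd12 : ((shiftMat r S).submatrix (emb4 (0 : Fin 4) 1 2 3 (by decide) (by decide) (by decide) (by decide) (by decide) (by decide)) (emb4 cz12 cz123 cf1 cf2 ne_cz12_cz123 ne_cz12_cf1 ne_cz12_cf2 ne_cz123_cf1 ne_cz123_cf2 ne_cf1_cf2)).det = (-1:ℝ) * S 0 cz12 + S 0 cz12 * r 1 + S 0 cz12 * r 2 + (-1:ℝ) * S 0 cz12 * r 3 + S 0 cz123 * r 3 := by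
    rw [det_fin_four]
    simp only [Matrix.submatrix_apply, emb3, emb4, Function.Embedding.coeFn_mk,
      Matrix.cons_val_zero, Matrix.cons_val_one, Matrix.head_cons, Matrix.cons_val_two,
      Matrix.tail_cons, Matrix.cons_val_three, shiftMat, Matrix.of_apply, hr0, e_cz12_1, e_cz12_2, e_cz12_3, e_cz123_1, e_cz123_2, e_cz123_3, e_cf1_0, e_cf1_1, e_cf1_2, e_cf1_3, e_cf2_0, e_cf2_1, e_cf2_2, e_cf2_3]
    ring
  have hM12 : |(-1:ℝ) * S 0 cz12 + S 0 cz12 * r 1 + S 0 cz12 * r 2 + (-1:ℝ) * S 0 cz12 * r 3 + S 0 cz123 * r 3| ≤ 1 := by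
    have h := hsub 4 (emb4 (0 : Fin 4) 1 2 3 (by decide) (by decide) (by decide) (by decide) (by decide) (by decide)) (emb4 cz12 cz123 cf1 cf2 ne_cz12_cz123 ne_cz12_cf1 ne_cz12_cf2 ne_cz123_cf1 ne_cz123_cf2 ne_cf1_cf2)
    rw [hd12] at h; exact h
  have hd13 : ((shiftMat r S).submatrix (emb4 (0 : Fin 4) 1 2 3 (by decide) (by decide) (by decide) (by decide) (by decide) (by decide)) (emb4 cz12 cz123 cf13 cf23 ne_cz12_cz123 ne_cz12_cf13 ne_cz12_cf23 ne_cz123_cf13 ne_cz123_cf23 ne_cf13_cf23)).det = S 0 cz12 + (-1:ℝ) * S 0 cz12 * r 3 + (-2:ℝ) * S 0 cz123 + S 0 cz123 * r 1 + S 0 cz123 * r 2 + S 0 cz123 * r 3 := by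
    rw [det_fin_four]
    simp only [Matrix.submatrix_apply, emb3, emb4, Function.Embedding.coeFn_mk,
      Matrix.cons_val_zero, Matrix.cons_val_one, Matrix.head_cons, Matrix.cons_val_two,
      Matrix.tail_cons, Matrix.cons_val_three, shiftMat, Matrix.of_apply, hr0, e_cz12_1, e_cz12_2, e_cz12_3, e_cz123_1, e_cz123_2, e_cz123_3, e_cf13_0, e_cf13_1, e_cf13_2, e_cf13_3, e_cf23_0, e_cf23_1, e_cf23_2, e_cf23_3]
    ring
  have hM13 : |S 0 cz12 + (-1:ℝ) * S 0 cz12 * r 3 + (-2:ℝ) * S 0 cz123 + S 0 cz123 * r 1 + S 0 cz123 * r 2 + S 0 cz123 * r 3| ≤ 1 := by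
    have h := hsub 4 (emb4 (0 : Fin 4) 1 2 3 (by decide) (by decide) (by decide) (by decide) (by decide) (by decide)) (emb4 cz12 cz123 cf13 cf23 ne_cz12_cz123 ne_cz12_cf13 ne_cz12_cf23 ne_cz123_cf13 ne_cz123_cf23 ne_cf13_cf23)
    rw [hd13] at h; exact h
  have hd14 : ((shiftMat r S).submatrix (emb4 (0 : Fin 4) 1 2 3 (by decide) (by decide) (by decide) (by decide) (by decide) (by decide)) (emb4 cze cz2 cf1 cf3 ne_cze_cz2 ne_cze_cf1 ne_cze_cf3 ne_cz2_cf1 ne_cz2_cf3 ne_cf1_cf3)).det = S 0 cz2 * r 2 + S 0 cze + (-1:ℝ) * S 0 cze * r 1 + (-1:ℝ) * S 0 cze * r 2 + (-1:ℝ) * S 0 cze * r 3 := by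
    rw [det_fin_four]
    simp only [Matrix.submatrix_apply, emb3, emb4, Function.Embedding.coeFn_mk,
      Matrix.cons_val_zero, Matrix.cons_val_one, Matrix.head_cons, Matrix.cons_val_two,
      Matrix.tail_cons, Matrix.cons_val_three, shiftMat, Matrix.of_apply, hr0, e_cze_1, e_cze_2, e_cze_3, e_cz2_1, e_cz2_2, e_cz2_3, e_cf1_0, e_cf1_1, e_cf1_2, e_cf1_3, e_cf3_0, e_cf3_1, e_cf3_2, e_cf3_3]
    ring
  have hM14 : |S 0 cz2 * r 2 + S 0 cze + (-1:ℝ) * S 0 cze * r 1 + (-1:ℝ) * S 0 cze * r 2 + (-1:ℝ) * S 0 cze * r 3| ≤ 1 := by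
    have h := hsub 4 (emb4 (0 : Fin 4) 1 2 3 (by decide) (by decide) (by decide) (by decide) (by decide) (by decide)) (emb4 cze cz2 cf1 cf3 ne_cze_cz2 ne_cze_cf1 ne_cze_cf3 ne_cz2_cf1 ne_cz2_cf3 ne_cf1_cf3)
    rw [hd14] at h; exact h
  have hd15 : ((shiftMat r S).submatrix (emb4 (0 : Fin 4) 1 2 3 (by decide) (by decide) (by decide) (by decide) (by decide) (by decide)) (emb4 cze cz2 cf12 cf23 ne_cze_cz2 ne_cze_cf12 ne_cze_cf23 ne_cz2_cf12 ne_cz2_cf23 ne_cf12_cf23)).det = (-1:ℝ) * S 0 cz2 * r 1 + S 0 cz2 * r 2 + (-1:ℝ) * S 0 cz2 * r 3 + S 0 cze + (-1:ℝ) * S 0 cze * r 2 := by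
    rw [det_fin_four]
    simp only [Matrix.submatrix_apply, emb3, emb4, Function.Embedding.coeFn_mk,
      Matrix.cons_val_zero, Matrix.cons_val_one, Matrix.head_cons, Matrix.cons_val_two,
      Matrix.tail_cons, Matrix.cons_val_three, shiftMat, Matrix.of_apply, hr0, e_cze_1, e_cze_2, e_cze_3, e_cz2_1, e_cz2_2, e_cz2_3, e_cf12_0, e_cf12_1, e_cf12_2, e_cf12_3, e_cf23_0, e_cf23_1, e_cf23_2, e_cf23_3]
    ring
  have hM15 : |(-1:ℝ) * S 0 cz2 * r 1 + S 0 cz2 * r 2 + (-1:ℝ) * S 0 cz2 * r 3 + S 0 cze + (-1:ℝ) * S 0 cze * r 2| ≤ 1 := by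
    have h := hsub 4 (emb4 (0 : Fin 4) 1 2 3 (by decide) (by decide) (by decide) (by decide) (by decide) (by decide)) (emb4 cze cz2 cf12 cf23 ne_cze_cz2 ne_cze_cf12 ne_cze_cf23 ne_cz2_cf12 ne_cz2_cf23 ne_cf12_cf23)
    rw [hd15] at h; exact h
  have hd16 : ((shiftMat r S).submatrix (emb4 (0 : Fin 4) 1 2 3 (by decide) (by decide) (by decide) (by decide) (by decide) (by decide)) (emb4 cz13 cz123 cf1 cf3 ne_cz13_cz123 ne_cz13_cf1 ne_cz13_cf3 ne_cz123_cf1 ne_cz123_cf3 ne_cf1_cf3)).det = (-1:ℝ) * S 0 cz123 * r 2 + S 0 cz13 + (-1:ℝ) * S 0 cz13 * r 1 + S 0 cz13 * r 2 + (-1:ℝ) * S 0 cz13 * r 3 := by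
    rw [det_fin_four]
    simp only [Matrix.submatrix_apply, emb3, emb4, Function.Embedding.coeFn_mk,
      Matrix.cons_val_zero, Matrix.cons_val_one, Matrix.head_cons, Matrix.cons_val_two,
      Matrix.tail_cons, Matrix.cons_val_three, shiftMat, Matrix.of_apply, hr0, e_cz13_1, e_cz13_2, e_cz13_3, e_cz123_1, e_cz123_2, e_cz123_3, e_cf1_0, e_cf1_1, e_cf1_2, e_cf1_3, e_cf3_0, e_cf3_1, e_cf3_2, e_cf3_3]
    ring
  have hM16 : |(-1:ℝ) * S 0 cz123 * r 2 + S 0 cz13 + (-1:ℝ) * S 0 cz13 * r 1 + S 0 cz13 * r 2 + (-1:ℝ) * S 0 cz13 * r 3| ≤ 1 := by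
    have h := hsub 4 (emb4 (0 : Fin 4) 1 2 3 (by decide) (by decide) (by decide) (by decide) (by decide) (by decide)) (emb4 cz13 cz123 cf1 cf3 ne_cz13_cz123 ne_cz13_cf1 ne_cz13_cf3 ne_cz123_cf1 ne_cz123_cf3 ne_cf1_cf3)
    rw [hd16] at h; exact h
  have hd17 : ((shiftMat r S).submatrix (emb4 (0 : Fin 4) 1 2 3 (by decide) (by decide) (by decide) (by decide) (by decide) (by decide)) (emb4 cz13 cz123 cf12 cf23 ne_cz13_cz123 ne_cz13_cf12 ne_cz13_cf23 ne_cz123_cf12 ne_cz123_cf23 ne_cf12_cf23)).det = 2 * S 0 cz123 + (-1:ℝ) * S 0 cz123 * r 1 + (-1:ℝ) * S 0 cz123 * r 2 + (-1:ℝ) * S 0 cz123 * r 3 + (-1:ℝ) * S 0 cz13 + S 0 cz13 * r 2 := by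
    rw [det_fin_four]
    simp only [Matrix.submatrix_apply, emb3, emb4, Function.Embedding.coeFn_mk,
      Matrix.cons_val_zero, Matrix.cons_val_one, Matrix.head_cons, Matrix.cons_val_two,
      Matrix.tail_cons, Matrix.cons_val_three, shiftMat, Matrix.of_apply, hr0, e_cz13_1, e_cz13_2, e_cz13_3, e_cz123_1, e_cz123_2, e_cz123_3, e_cf12_0, e_cf12_1, e_cf12_2, e_cf12_3, e_cf23_0, e_cf23_1, e_cf23_2, e_cf23_3]
    ring
  have hM17 : |2 * S 0 cz123 + (-1:ℝ) * S 0 cz123 * r 1 + (-1:ℝ) * S 0 cz123 * r 2 + (-1:ℝ) * S 0 cz123 * r 3 + (-1:ℝ) * S 0 cz13 + S 0 cz13 * r 2| ≤ 1 := by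
    have h := hsub 4 (emb4 (0 : Fin 4) 1 2 3 (by decide) (by decide) (by decide) (by decide) (by decide) (by decide)) (emb4 cz13 cz123 cf12 cf23 ne_cz13_cz123 ne_cz13_cf12 ne_cz13_cf23 ne_cz123_cf12 ne_cz123_cf23 ne_cf12_cf23)
    rw [hd17] at h; exact h
  have hd18 : ((shiftMat r S).submatrix (emb4 (0 : Fin 4) 1 2 3 (by decide) (by decide) (by decide) (by decide) (by decide) (by decide)) (emb4 cze cz1 cf2 cf3 ne_cze_cz1 ne_cze_cf2 ne_cze_cf3 ne_cz1_cf2 ne_cz1_cf3 ne_cf2_cf3)).det = (-1:ℝ) * S 0 cz1 * r 1 + (-1:ℝ) * S 0 cze + S 0 cze * r 1 + S 0 cze * r 2 + S 0 cze * r 3 := by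
    rw [det_fin_four]
    simp only [Matrix.submatrix_apply, emb3, emb4, Function.Embedding.coeFn_mk,
      Matrix.cons_val_zero, Matrix.cons_val_one, Matrix.head_cons, Matrix.cons_val_two,
      Matrix.tail_cons, Matrix.cons_val_three, shiftMat, Matrix.of_apply, hr0, e_cze_1, e_cze_2, e_cze_3, e_cz1_1, e_cz1_2, e_cz1_3, e_cf2_0, e_cf2_1, e_cf2_2, e_cf2_3, e_cf3_0, e_cf3_1, e_cf3_2, e_cf3_3]
    ring
  have hM18 : |(-1:ℝ) * S 0 cz1 * r 1 + (-1:ℝ) * S 0 cze + S 0 cze * r 1 + S 0 cze * r 2 + S 0 cze * r 3| ≤ 1 := by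
    have h := hsub 4 (emb4 (0 : Fin 4) 1 2 3 (by decide) (by decide) (by decide) (by decide) (by decide) (by decide)) (emb4 cze cz1 cf2 cf3 ne_cze_cz1 ne_cze_cf2 ne_cze_cf3 ne_cz1_cf2 ne_cz1_cf3 ne_cf2_cf3)
    rw [hd18] at h; exact h
  have hd19 : ((shiftMat r S).submatrix (emb4 (0 : Fin 4) 1 2 3 (by decide) (by decide) (by decide) (by decide) (by decide) (by decide)) (emb4 cze cz1 cf12 cf13 ne_cze_cz1 ne_cze_cf12 ne_cze_cf13 ne_cz1_cf12 ne_cz1_cf13 ne_cf12_cf13)).det = (-1:ℝ) * S 0 cz1 * r 1 + S 0 cz1 * r 2 + S 0 cz1 * r 3 + (-1:ℝ) * S 0 cze + S 0 cze * r 1 := by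
    rw [det_fin_four]
    simp only [Matrix.submatrix_apply, emb3, emb4, Function.Embedding.coeFn_mk,
      Matrix.cons_val_zero, Matrix.cons_val_one, Matrix.head_cons, Matrix.cons_val_two,
      Matrix.tail_cons, Matrix.cons_val_three, shiftMat, Matrix.of_apply, hr0, e_cze_1, e_cze_2, e_cze_3, e_cz1_1, e_cz1_2, e_cz1_3, e_cf12_0, e_cf12_1, e_cf12_2, e_cf12_3, e_cf13_0, e_cf13_1, e_cf13_2, e_cf13_3]
    ring
  have hM19 : |(-1:ℝ) * S 0 cz1 * r 1 + S 0 cz1 * r 2 + S 0 cz1 * r 3 + (-1:ℝ) * S 0 cze + S 0 cze * r 1| ≤ 1 := by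
    have h := hsub 4 (emb4 (0 : Fin 4) 1 2 3 (by decide) (by decide) (by decide) (by decide) (by decide) (by decide)) (emb4 cze cz1 cf12 cf13 ne_cze_cz1 ne_cze_cf12 ne_cze_cf13 ne_cz1_cf12 ne_cz1_cf13 ne_cf12_cf13)
    rw [hd19] at h; exact h
  have hd20 : ((shiftMat r S).submatrix (emb4 (0 : Fin 4) 1 2 3 (by decide) (by decide) (by decide) (by decide) (by decide) (by decide)) (emb4 cz23 cz123 cf2 cf3 ne_cz23_cz123 ne_cz23_cf2 ne_cz23_cf3 ne_cz123_cf2 ne_cz123_cf3 ne_cf2_cf3)).det = S 0 cz123 * r 1 + (-1:ℝ) * S 0 cz23 + (-1:ℝ) * S 0 cz23 * r 1 + S 0 cz23 * r 2 + S 0 cz23 * r 3 := by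
    rw [det_fin_four]
    simp only [Matrix.submatrix_apply, emb3, emb4, Function.Embedding.coeFn_mk,
      Matrix.cons_val_zero, Matrix.cons_val_one, Matrix.head_cons, Matrix.cons_val_two,
      Matrix.tail_cons, Matrix.cons_val_three, shiftMat, Matrix.of_apply, hr0, e_cz23_1, e_cz23_2, e_cz23_3, e_cz123_1, e_cz123_2, e_cz123_3, e_cf2_0, e_cf2_1, e_cf2_2, e_cf2_3, e_cf3_0, e_cf3_1, e_cf3_2, e_cf3_3]
    ring
  have hM20 : |S 0 cz123 * r 1 + (-1:ℝ) * S 0 cz23 + (-1:ℝ) * S 0 cz23 * r 1 + S 0 cz23 * r 2 + S 0 cz23 * r 3| ≤ 1 := by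
    have h := hsub 4 (emb4 (0 : Fin 4) 1 2 3 (by decide) (by decide) (by decide) (by decide) (by decide) (by decide)) (emb4 cz23 cz123 cf2 cf3 ne_cz23_cz123 ne_cz23_cf2 ne_cz23_cf3 ne_cz123_cf2 ne_cz123_cf3 ne_cf2_cf3)
    rw [hd20] at h; exact h
  have hd21 : ((shiftMat r S).submatrix (emb4 (0 : Fin 4) 1 2 3 (by decide) (by decide) (by decide) (by decide) (by decide) (by decide)) (emb4 cz23 cz123 cf12 cf13 ne_cz23_cz123 ne_cz23_cf12 ne_cz23_cf13 ne_cz123_cf12 ne_cz123_cf13 ne_cf12_cf13)).det = (-2:ℝ) * S 0 cz123 + S 0 cz123 * r 1 + S 0 cz123 * r 2 + S 0 cz123 * r 3 + S 0 cz23 + (-1:ℝ) * S 0 cz23 * r 1 := by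
    rw [det_fin_four]
    simp only [Matrix.submatrix_apply, emb3, emb4, Function.Embedding.coeFn_mk,
      Matrix.cons_val_zero, Matrix.cons_val_one, Matrix.head_cons, Matrix.cons_val_two,
      Matrix.tail_cons, Matrix.cons_val_three, shiftMat, Matrix.of_apply, hr0, e_cz23_1, e_cz23_2, e_cz23_3, e_cz123_1, e_cz123_2, e_cz123_3, e_cf12_0, e_cf12_1, e_cf12_2, e_cf12_3, e_cf13_0, e_cf13_1, e_cf13_2, e_cf13_3]
    ring
  have hM21 : |(-2:ℝ) * S 0 cz123 + S 0 cz123 * r 1 + S 0 cz123 * r 2 + S 0 cz123 * r 3 + S 0 cz23 + (-1:ℝ) * S 0 cz23 * r 1| ≤ 1 := by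
    have h := hsub 4 (emb4 (0 : Fin 4) 1 2 3 (by decide) (by decide) (by decide) (by decide) (by decide) (by decide)) (emb4 cz23 cz123 cf12 cf13 ne_cz23_cz123 ne_cz23_cf12 ne_cz23_cf13 ne_cz123_cf12 ne_cz123_cf13 ne_cf12_cf13)
    rw [hd21] at h; exact h
  have hd22 : ((shiftMat r S).submatrix (emb4 (0 : Fin 4) 1 2 3 (by decide) (by decide) (by decide) (by decide) (by decide) (by decide)) (emb4 cze cz12 cz13 cz23 ne_cze_cz12 ne_cze_cz13 ne_cze_cz23 ne_cz12_cz13 ne_cz12_cz23 ne_cz13_cz23)).det = S 0 cz12 * r 1 + S 0 cz12 * r 2 + (-1:ℝ) * S 0 cz12 * r 3 + S 0 cz13 * r 1 + (-1:ℝ) * S 0 cz13 * r 2 + S 0 cz13 * r 3 + (-1:ℝ) * S 0 cz23 * r 1 + S 0 cz23 * r 2 + S 0 cz23 * r 3 + 2 * S 0 cze + (-1:ℝ) * S 0 cze * r 1 + (-1:ℝ) * S 0 cze * r 2 + (-1:ℝ) * S 0 cze * r 3 := by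
    rw [det_fin_four]
    simp only [Matrix.submatrix_apply, emb3, emb4, Function.Embedding.coeFn_mk,
      Matrix.cons_val_zero, Matrix.cons_val_one, Matrix.head_cons, Matrix.cons_val_two,
      Matrix.tail_cons, Matrix.cons_val_three, shiftMat, Matrix.of_apply, hr0, e_cze_1, e_cze_2, e_cze_3, e_cz12_1, e_cz12_2, e_cz12_3, e_cz13_1, e_cz13_2, e_cz13_3, e_cz23_1, e_cz23_2, e_cz23_3]
    ring
  have hM22 : |S 0 cz12 * r 1 + S 0 cz12 * r 2 + (-1:ℝ) * S 0 cz12 * r 3 + S 0 cz13 * r 1 + (-1:ℝ) * S 0 cz13 * r 2 + S 0 cz13 * r 3 + (-1:ℝ) * S 0 cz23 * r 1 + S 0 cz23 * r 2 + S 0 cz23 * r 3 + 2 * S 0 cze + (-1:ℝ) * S 0 cze * r 1 + (-1:ℝ) * S 0 cze * r 2 + (-1:ℝ) * S 0 cze * r 3| ≤ 1 := by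
    have h := hsub 4 (emb4 (0 : Fin 4) 1 2 3 (by decide) (by decide) (by decide) (by decide) (by decide) (by decide)) (emb4 cze cz12 cz13 cz23 ne_cze_cz12 ne_cze_cz13 ne_cze_cz23 ne_cz12_cz13 ne_cz12_cz23 ne_cz13_cz23)
    rw [hd22] at h; exact h
  have hd23 : ((shiftMat r S).submatrix (emb4 (0 : Fin 4) 1 2 3 (by decide) (by decide) (by decide) (by decide) (by decide) (by decide)) (emb4 cz1 cz2 cz3 cz123 ne_cz1_cz2 ne_cz1_cz3 ne_cz1_cz123 ne_cz2_cz3 ne_cz2_cz123 ne_cz3_cz123)).det = (-1:ℝ) * S 0 cz1 + (-1:ℝ) * S 0 cz1 * r 1 + S 0 cz1 * r 2 + S 0 cz1 * r 3 + S 0 cz123 + (-1:ℝ) * S 0 cz123 * r 1 + (-1:ℝ) * S 0 cz123 * r 2 + (-1:ℝ) * S 0 cz123 * r 3 + (-1:ℝ) * S 0 cz2 + S 0 cz2 * r 1 + (-1:ℝ) * S 0 cz2 * r 2 + S 0 cz2 * r 3 + (-1:ℝ) * S 0 cz3 + S 0 cz3 * r 1 + S 0 cz3 * r 2 + (-1:ℝ)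 * S 0 cz3 * r 3 := by
    rw [det_fin_four]
    simp only [Matrix.submatrix_apply, emb3, emb4, Function.Embedding.coeFn_mk,
      Matrix.cons_val_zero, Matrix.cons_val_one, Matrix.head_cons, Matrix.cons_val_two,
      Matrix.tail_cons, Matrix.cons_val_three, shiftMat, Matrix.of_apply, hr0, e_cz1_1, e_cz1_2, e_cz1_3, e_cz2_1, e_cz2_2, e_cz2_3, e_cz3_1, e_cz3_2, e_cz3_3, e_cz123_1, e_cz123_2, e_cz123_3]
    ring
  have hM23 : |(-1:ℝ) * S 0 cz1 + (-1:ℝ) * S 0 cz1 * r 1 + S 0 cz1 * r 2 + S 0 cz1 * r 3 + S 0 cz123 + (-1:ℝ) * S 0 cz123 * r 1 + (-1:ℝ) * S 0 cz123 * r 2 + (-1:ℝ) * S 0 cz123 * r 3 + (-1:ℝ) * S 0 cz2 + S 0 cz2 * r 1 + (-1:ℝ) * S 0 cz2 * r 2 + S 0 cz2 * r 3 + (-1:ℝ) * S 0 cz3 + S 0 cz3 * r 1 + S 0 cz3 * r 2 + (-1:ℝ) * S 0 cz3 * r 3| ≤ 1 := by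
    have h := hsub 4 (emb4 (0 : Fin 4) 1 2 3 (by decide) (by decide) (by decide) (by decide) (by decide) (by decide)) (emb4 cz1 cz2 cz3 cz123 ne_cz1_cz2 ne_cz1_cz3 ne_cz1_cz123 ne_cz2_cz3 ne_cz2_cz123 ne_cz3_cz123)
    rw [hd23] at h; exact h
  obtain ⟨hh1, hh2, hh3⟩ := core (r 1) (r 2) (r 3) (S 0 cze) (S 0 cz1) (S 0 cz2) (S 0 cz3) (S 0 cz12) (S 0 cz13) (S 0 cz23) (S 0 cz123) s_cze s_cz1 s_cz2 s_cz3 s_cz12 s_cz13 s_cz23 s_cz123 hplus (hr 1).1 (le_of_lt (hr 1).2) (hr 2).1 (le_of_lt (hr 2).2) (hr 3).1 (le_of_lt (hr 3).2) hM0 hM1 hM2 hM3 hM4 hM5 hM6 hM7 hM8 hM9 hM10 hM11 hM12 hM13 hM14 hM15 hM16 hM17 hM18 hM19 hM20 hM21 hM22 hM23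
  funext i
  fin_cases i
  · simpa using hr0
  · simpa using hh1
  · simpa using hh2
  · simpa using hh3
end

section
/- Let S ⊆ ℝ^m be a finite nonempty set. Then the difference set of the pyramid over S satisfies |D(pyr(S))| = |D(S)| + 2|S|, and the maximal (m+1)×(m+1) determinant absolute value of D(pyr(S)) equals the maximal m×m determinant absolute value of D(S), i.e., Δ(D(pyr(S))) = Δ(D(S)). -/
open Matrix

/-- The difference set `D(S) = S - S` of a set `S ⊆ ℝ^m`. -/
def diffSet {m : ℕ} (S : Set (Fin m → ℝ)) : Set (Fin m → ℝ) :=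
  {x | ∃ a ∈ S, ∃ b ∈ S, x = a - b}

/-- The pyramid `pyr(S) = (S × {0}) ∪ {e_{m+1}} ⊆ ℝ^{m+1}` over `S ⊆ ℝ^m`. -/
def pyr {m : ℕ} (S : Set (Fin m → ℝ)) : Set (Fin (m + 1) → ℝ) :=
  ((fun x : Fin m → ℝ => Fin.snoc x 0) '' S) ∪ {Fin.snoc (0 : Fin m → ℝ) 1}

/-- `Δ(T)`: the maximum absolute value of the determinant of a matrix whose columns form a
`d`-element subset of `T ⊆ ℝ^d` (by the `sSup` convention, this is `0` if `T` has fewer than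
`d` elements). -/
noncomputable def DeltaSet {d : ℕ} (T : Set (Fin d → ℝ)) : ℝ :=
  sSup {x : ℝ | ∃ v : Fin d → (Fin d → ℝ), (∀ i, v i ∈ T) ∧ Function.Injective v ∧
    x = |(Matrix.of fun i j => v j i).det|}

section
variable {m : ℕ}

lemma snoc_sub {m : ℕ} (a b : Fin m → ℝ) (c d : ℝ) :
    (Fin.snoc a c : Fin (m+1) → ℝ) - Fin.snoc b d = Fin.snoc (a - b) (c - d) := by
  funext i
  refine Fin.lastCases ?_ ?_ i <;> simp

lemma snoc_inj {m : ℕ} (c : ℝ) :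
    Function.Injective (fun x : Fin m → ℝ => (Fin.snoc x c : Fin (m+1) → ℝ)) := by
  intro x y h
  funext i
  have := congrFun h (Fin.castSucc i)
  simpa using this

lemma diffSet_pyr {m : ℕ} (S : Set (Fin m → ℝ)) (hne : S.Nonempty) :
    diffSet (pyr S) =
      ((fun x : Fin m → ℝ => Fin.snoc x 0) '' diffSet S) ∪
      ((fun s : Fin m → ℝ => Fin.snoc s (-1)) '' S) ∪
      ((fun s : Fin m → ℝ => Fin.snoc (-s) 1) '' S) := by
  ext x
  constructor
  · rintro ⟨a, ha, b, hb, rfl⟩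
    rcases ha with ⟨a', ha', rfl⟩ | ha <;> rcases hb with ⟨b', hb', rfl⟩ | hb
    · refine Or.inl <| Or.inl ⟨a' - b', ⟨a', ha', b', hb', rfl⟩, ?_⟩
      show (Fin.snoc (a' - b') 0 : Fin (m+1) → ℝ) = _
      rw [snoc_sub]; norm_num
    · rw [Set.mem_singleton_iff] at hb; subst hb
      refine Or.inl <| Or.inr ⟨a', ha', ?_⟩
      show (Fin.snoc a' (-1) : Fin (m+1) → ℝ) = _
      rw [snoc_sub]; norm_num
    · rw [Set.mem_singleton_iff] at ha; subst ha
      refine Or.inr ⟨b', hb', ?_⟩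
      show (Fin.snoc (-b') 1 : Fin (m+1) → ℝ) = _
      rw [snoc_sub]; norm_num
    · rw [Set.mem_singleton_iff] at ha hb; subst ha; subst hb
      obtain ⟨s, hs⟩ := hne
      refine Or.inl <| Or.inl ⟨0, ⟨s, hs, s, hs, (sub_self s).symm⟩, ?_⟩
      show (Fin.snoc 0 0 : Fin (m+1) → ℝ) = _
      rw [snoc_sub]; norm_num
  · rintro ((⟨d, ⟨a, ha, b, hb, rfl⟩, rfl⟩ | ⟨s, hs, rfl⟩) | ⟨s, hs, rfl⟩)
    · exact ⟨_, Or.inl ⟨a, ha, rfl⟩, _, Or.inl ⟨b, hb, rfl⟩, by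
        show (Fin.snoc (a - b) 0 : Fin (m+1) → ℝ) = _; rw [snoc_sub]; norm_num⟩
    · exact ⟨_, Or.inl ⟨s, hs, rfl⟩, _, Or.inr rfl, by
        show (Fin.snoc s (-1) : Fin (m+1) → ℝ) = _; rw [snoc_sub]; norm_num⟩
    · exact ⟨_, Or.inr rfl, _, Or.inl ⟨s, hs, rfl⟩, by
        show (Fin.snoc (-s) 1 : Fin (m+1) → ℝ) = _; rw [snoc_sub]; norm_num⟩

lemma diffSet_eq_image2 {m : ℕ} (S : Set (Fin m → ℝ)) : diffSet S = Set.image2 Sub.sub S S := by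
  ext x
  constructor
  · rintro ⟨a, ha, b, hb, rfl⟩; exact ⟨a, ha, b, hb, rfl⟩
  · rintro ⟨a, ha, b, hb, rfl⟩; exact ⟨a, ha, b, hb, rfl⟩

lemma diffSet_finite {m : ℕ} {S : Set (Fin m → ℝ)} (h : S.Finite) : (diffSet S).Finite := by
  rw [diffSet_eq_image2]; exact h.image2 _ h

lemma card_part {m : ℕ} (S : Set (Fin m → ℝ)) (hfin : S.Finite) (hne : S.Nonempty) :
    (diffSet (pyr S)).ncard = (diffSet S).ncard + 2 * S.ncard := by
  rw [diffSet_pyr S hne]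
  have hD := diffSet_finite hfin
  have h1 : ((fun x : Fin m → ℝ => (Fin.snoc x 0 : Fin (m+1) → ℝ)) '' diffSet S).Finite := hD.image _
  have h2 : ((fun s : Fin m → ℝ => (Fin.snoc s (-1) : Fin (m+1) → ℝ)) '' S).Finite := hfin.image _
  have h3 : ((fun s : Fin m → ℝ => (Fin.snoc (-s) 1 : Fin (m+1) → ℝ)) '' S).Finite := hfin.image _
  have d12 : Disjoint ((fun x : Fin m → ℝ => (Fin.snoc x 0 : Fin (m+1) → ℝ)) '' diffSet S)
      ((fun s : Fin m → ℝ => (Fin.snoc s (-1) : Fin (m+1) → ℝ)) '' S) := by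
    rw [Set.disjoint_left]
    rintro x ⟨a, _, rfl⟩ ⟨b, _, hb⟩
    have := congrFun hb (Fin.last m); simp at this
  have d13 : Disjoint ((fun x : Fin m → ℝ => (Fin.snoc x 0 : Fin (m+1) → ℝ)) '' diffSet S)
      ((fun s : Fin m → ℝ => (Fin.snoc (-s) 1 : Fin (m+1) → ℝ)) '' S) := by
    rw [Set.disjoint_left]
    rintro x ⟨a, _, rfl⟩ ⟨b, _, hb⟩
    have := congrFun hb (Fin.last m); simp at this
  have d23 : Disjoint ((fun s : Fin m → ℝ => (Fin.snoc s (-1) : Fin (m+1) → ℝ)) '' S)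
      ((fun s : Fin m → ℝ => (Fin.snoc (-s) 1 : Fin (m+1) → ℝ)) '' S) := by
    rw [Set.disjoint_left]
    rintro x ⟨a, _, rfl⟩ ⟨b, _, hb⟩
    have := congrFun hb (Fin.last m); simp at this; linarith
  rw [Set.ncard_union_eq (Set.disjoint_union_left.2 ⟨d13, d23⟩) (h1.union h2) h3,
    Set.ncard_union_eq d12 h1 h2,
    Set.ncard_image_of_injective _ (snoc_inj 0),
    Set.ncard_image_of_injective _ (snoc_inj (-1)),
    Set.ncard_image_of_injective _
      (fun x y h => neg_injective ((snoc_inj 1) h) : Function.Injective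
        (fun s : Fin m → ℝ => (Fin.snoc (-s) 1 : Fin (m+1) → ℝ)))]
  ring

lemma det_last_col {m : ℕ} (M : Matrix (Fin (m+1)) (Fin (m+1)) ℝ)
    (h : ∀ i, i ≠ Fin.last m → M i (Fin.last m) = 0) :
    M.det = M (Fin.last m) (Fin.last m) * (M.submatrix Fin.castSucc Fin.castSucc).det := by
  rw [Matrix.det_succ_column M (Fin.last m), Finset.sum_eq_single (Fin.last m)]
  · have hsgn : ((-1:ℝ)) ^ ((Fin.last m : ℕ) + (Fin.last m : ℕ)) = 1 := by
      rw [← two_mul, pow_mul]; norm_num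
    rw [hsgn, Fin.succAbove_last, one_mul]
  · intro i _ hi
    rw [h i hi]; ring
  · intro hmem; exact absurd (Finset.mem_univ _) hmem

lemma deltaIndex_finite {d : ℕ} {T : Set (Fin d → ℝ)} (hT : T.Finite) :
    {x : ℝ | ∃ v : Fin d → (Fin d → ℝ), (∀ i, v i ∈ T) ∧ Function.Injective v ∧
      x = |(Matrix.of fun i j => v j i).det|}.Finite := by
  apply Set.Finite.subset (Set.Finite.image
    (fun v : Fin d → (Fin d → ℝ) => |(Matrix.of fun i j => v j i).det|)
    (Set.Finite.pi (fun _ : Fin d => hT)))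
  rintro x ⟨v, hv, _, rfl⟩
  exact ⟨v, by simpa [Set.mem_pi] using hv, rfl⟩

lemma delta_part (S : Set (Fin m → ℝ)) (hfin : S.Finite) (hne : S.Nonempty) :
    DeltaSet (diffSet (pyr S)) = DeltaSet (diffSet S) := by
  have hpyrfin : (pyr S).Finite := (hfin.image _).union (Set.finite_singleton _)
  set A := {x : ℝ | ∃ v : Fin m → (Fin m → ℝ), (∀ i, v i ∈ diffSet S) ∧ Function.Injective v ∧
      x = |(Matrix.of fun i j => v j i).det|} with hA
  set B := {x : ℝ | ∃ v : Fin (m+1) → (Fin (m+1) → ℝ), (∀ i, v i ∈ diffSet (pyr S)) ∧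
      Function.Injective v ∧ x = |(Matrix.of fun i j => v j i).det|} with hB
  have hAfin : A.Finite := deltaIndex_finite (diffSet_finite hfin)
  have hBfin : B.Finite := deltaIndex_finite (diffSet_finite hpyrfin)
  have hAnn : ∀ x ∈ A, (0:ℝ) ≤ x := by rintro x ⟨v, -, -, rfl⟩; positivity
  have hBnn : ∀ x ∈ B, (0:ℝ) ≤ x := by rintro x ⟨v, -, -, rfl⟩; positivity
  show sSup B = sSup A
  apply le_antisymm
  · -- hard direction: every element of B is ≤ sSup A
    apply Real.sSup_le _ (Real.sSup_nonneg hAnn)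
    rintro x ⟨v, hv, hinj, rfl⟩
    set P : Matrix (Fin (m+1)) (Fin (m+1)) ℝ := Matrix.of (fun i j => v i j) with hP
    have hPdet : |(Matrix.of fun i j => v j i).det| = |P.det| := by
      have : (Matrix.of fun i j => v j i) = Pᵀ := rfl
      rw [this, Matrix.det_transpose]
    rw [hPdet]
    set t : Fin (m+1) → ℝ := fun i => v i (Fin.last m) with ht
    set u : Fin (m+1) → (Fin m → ℝ) := fun i j => v i (Fin.castSucc j) with hu
    have hcase : ∀ i, (t i = 0 ∧ u i ∈ diffSet S) ∨ (t i = -1 ∧ u i ∈ S) ∨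
        (t i = 1 ∧ -(u i) ∈ S) := by
      intro i
      have := hv i
      rw [diffSet_pyr S hne] at this
      rcases this with (⟨d, hd, hvi⟩ | ⟨s, hs, hvi⟩) | ⟨s, hs, hvi⟩
      · refine Or.inl ⟨?_, ?_⟩
        · rw [ht]; simp only [← hvi]; simp
        · have : u i = d := by funext j; rw [hu]; simp only [← hvi]; simp
          rw [this]; exact hd
      · refine Or.inr (Or.inl ⟨?_, ?_⟩)
        · rw [ht]; simp only [← hvi]; simp
        · have : u i = s := by funext j; rw [hu]; simp only [← hvi]; simp
          rw [this]; exact hs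
      · refine Or.inr (Or.inr ⟨?_, ?_⟩)
        · rw [ht]; simp only [← hvi]; simp
        · have : -(u i) = s := by funext j; rw [hu]; simp only [← hvi]; simp
          rw [this]; exact hs
    by_cases hall : ∀ i, t i = 0
    · have : P.det = 0 := by
        apply Matrix.det_eq_zero_of_column_eq_zero (Fin.last m)
        intro i; exact hall i
      rw [this, abs_zero]
      exact Real.sSup_nonneg hAnn
    · push_neg at hall
      obtain ⟨j0, hj0⟩ := hall
      have hj0sq : t j0 * t j0 = 1 := by
        rcases hcase j0 with ⟨h, -⟩ | ⟨h, -⟩ | ⟨h, -⟩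
        · exact absurd h hj0
        · rw [h]; norm_num
        · rw [h]; norm_num
      set c : Fin (m+1) → ℝ := fun i => if i = j0 then 0 else -(t i * t j0) with hc
      set Q : Matrix (Fin (m+1)) (Fin (m+1)) ℝ :=
        Matrix.of (fun i j => P i j + c i * P j0 j) with hQ
      have hdetQ : Q.det = P.det :=
        Matrix.det_eq_of_forall_row_eq_smul_add_const c j0 (if_pos rfl) (fun i j => rfl)
      have hQlast : ∀ i, i ≠ j0 → Q i (Fin.last m) = 0 := by
        intro i hi
        show P i (Fin.last m) + c i * P j0 (Fin.last m) = 0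
        have h1 : P i (Fin.last m) = t i := rfl
        have h2 : P j0 (Fin.last m) = t j0 := rfl
        rw [h1, h2, hc]; simp only [if_neg hi]
        linear_combination (-(t i)) * hj0sq
      have hQrow : ∀ i, i ≠ j0 → (fun j => Q i (Fin.castSucc j)) ∈ diffSet S := by
        intro i hi
        have hQv : ∀ j, Q i (Fin.castSucc j) = u i j + c i * u j0 j := fun j => rfl
        rcases hcase i with ⟨hti, hui⟩ | ⟨hti, hui⟩ | ⟨hti, hui⟩
        · have hci : c i = 0 := by rw [hc]; simp only [if_neg hi, hti]; ring
          have : (fun j => Q i (Fin.castSucc j)) = u i := by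
            funext j; rw [hQv, hci]; ring
          rw [this]; exact hui
        · rcases hcase j0 with ⟨h0, h0u⟩ | ⟨h0, h0u⟩ | ⟨h0, h0u⟩
          · exact absurd h0 hj0
          · -- c i = -1 : u i - u j0
            refine ⟨u i, hui, u j0, h0u, ?_⟩
            funext j; rw [hQv, hc]; simp only [if_neg hi, hti, h0]
            simp only [Pi.sub_apply, Pi.neg_apply]; ring
          · -- c i = 1 : u i + u j0 = u i - (- u j0)
            refine ⟨u i, hui, -(u j0), h0u, ?_⟩
            funext j; rw [hQv, hc]; simp only [if_neg hi, hti, h0]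
            simp only [Pi.sub_apply, Pi.neg_apply]; ring
        · rcases hcase j0 with ⟨h0, h0u⟩ | ⟨h0, h0u⟩ | ⟨h0, h0u⟩
          · exact absurd h0 hj0
          · -- t i = 1, t j0 = -1, c i = 1 : u i + u j0 = u j0 - (- u i)
            refine ⟨u j0, h0u, -(u i), hui, ?_⟩
            funext j; rw [hQv, hc]; simp only [if_neg hi, hti, h0]
            simp only [Pi.sub_apply, Pi.neg_apply]; ring
          · -- t i = 1, t j0 = 1, c i = -1 : u i - u j0 = (-u j0) - (-u i)
            refine ⟨-(u j0), h0u, -(u i), hui, ?_⟩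
            funext j; rw [hQv, hc]; simp only [if_neg hi, hti, h0]
            simp only [Pi.sub_apply, Pi.neg_apply]; ring
      set σ : Equiv.Perm (Fin (m+1)) := Equiv.swap j0 (Fin.last m) with hσ
      have hσne : ∀ i : Fin (m+1), i ≠ Fin.last m → σ i ≠ j0 := by
        intro i hi hσi
        have : i = σ j0 := by
          have := congrArg σ hσi
          rwa [Equiv.swap_apply_self] at this
        rw [hσ, Equiv.swap_apply_left] at this
        exact hi this
      set R : Matrix (Fin (m+1)) (Fin (m+1)) ℝ := Matrix.of (fun i j => Q (σ i) j) with hR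
      have hdetR : |R.det| = |Q.det| := by
        have : R.det = Equiv.Perm.sign σ * Q.det := Matrix.det_permute σ Q
        rw [this]
        rcases Int.units_eq_one_or (Equiv.Perm.sign σ) with h | h <;> rw [h] <;> simp
      have hRlast : ∀ i, i ≠ Fin.last m → R i (Fin.last m) = 0 := by
        intro i hi; exact hQlast (σ i) (hσne i hi)
      have hRll : R (Fin.last m) (Fin.last m) = t j0 := by
        show Q (σ (Fin.last m)) (Fin.last m) = t j0
        rw [hσ, Equiv.swap_apply_right]
        show P j0 (Fin.last m) + c j0 * P j0 (Fin.last m) = t j0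
        rw [hc]; simp only [if_pos rfl]
        show t j0 + 0 * t j0 = t j0; ring
      have hdet2 := det_last_col R hRlast
      set v' : Fin m → (Fin m → ℝ) := fun i j => Q (σ (Fin.castSucc i)) (Fin.castSucc j) with hv'
      have hv'mem : ∀ i, v' i ∈ diffSet S := by
        intro i
        exact hQrow (σ (Fin.castSucc i)) (hσne _ (Fin.castSucc_lt_last i).ne)
      have hminor : (R.submatrix Fin.castSucc Fin.castSucc) = Matrix.of (fun i j => v' i j) := rfl
      have habs : |P.det| = |(Matrix.of fun i j => v' i j).det| := by
        rw [← hdetQ, ← hdetR, hdet2, hminor, abs_mul]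
        have habs1 : |t j0| = 1 := by
          rcases hcase j0 with ⟨h, -⟩ | ⟨h, -⟩ | ⟨h, -⟩
          · exact absurd h hj0
          · rw [h]; norm_num
          · rw [h]; norm_num
        rw [hRll, habs1, one_mul]
      rw [habs]
      by_cases hv'inj : Function.Injective v'
      · apply le_csSup hAfin.bddAbove
        refine ⟨v', hv'mem, hv'inj, ?_⟩
        have : (Matrix.of fun i j => v' j i) = (Matrix.of fun i j => v' i j)ᵀ := rfl
        rw [this, Matrix.det_transpose]
      · rw [Function.not_injective_iff] at hv'inj
        obtain ⟨a, b, hab, hne'⟩ := hv'inj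
        have : (Matrix.of fun i j => v' i j).det = 0 := by
          apply Matrix.det_zero_of_row_eq hne'
          funext j; exact congrFun hab j
        rw [this, abs_zero]
        exact Real.sSup_nonneg hAnn
  · -- easy direction
    apply Real.sSup_le _ (Real.sSup_nonneg hBnn)
    rintro x ⟨v, hv, hinj, rfl⟩
    obtain ⟨a, ha⟩ := id hne
    set w : Fin (m+1) → (Fin (m+1) → ℝ) :=
      Fin.snoc (fun j => (Fin.snoc (v j) 0 : Fin (m+1) → ℝ)) (Fin.snoc (-a) 1) with hw
    have hw1 : ∀ j' : Fin m, w (Fin.castSucc j') = (Fin.snoc (v j') 0 : Fin (m+1) → ℝ) := by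
      intro j'; rw [hw]; rw [Fin.snoc_castSucc]
    have hw2 : w (Fin.last m) = (Fin.snoc (-a) 1 : Fin (m+1) → ℝ) := by
      rw [hw]; rw [Fin.snoc_last]
    have hwmem : ∀ j, w j ∈ diffSet (pyr S) := by
      intro j
      rw [diffSet_pyr S hne]
      refine Fin.lastCases ?_ ?_ j
      · rw [hw2]
        exact Or.inr ⟨a, ha, rfl⟩
      · intro j'
        rw [hw1]
        exact Or.inl (Or.inl ⟨v j', hv j', rfl⟩)
    have hwinj : Function.Injective w := by
      intro j k
      refine Fin.lastCases ?_ ?_ j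
      · refine Fin.lastCases ?_ ?_ k
        · intro _; rfl
        · intro k' hjk
          exfalso
          have h' := congrFun hjk (Fin.last m)
          rw [hw2, hw1] at h'
          simp at h'
      · intro j'
        refine Fin.lastCases ?_ ?_ k
        · intro hjk
          exfalso
          have h' := congrFun hjk (Fin.last m)
          rw [hw1, hw2] at h'
          simp at h'
        · intro k' hjk
          rw [hw1, hw1] at hjk
          exact congrArg Fin.castSucc (hinj (snoc_inj 0 hjk))
    apply le_csSup hBfin.bddAbove
    refine ⟨w, hwmem, hwinj, ?_⟩
    set P : Matrix (Fin (m+1)) (Fin (m+1)) ℝ := Matrix.of (fun i j => w i j) with hP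
    have h1 : (Matrix.of fun i j => w j i).det = P.det := by
      have : (Matrix.of fun i j => w j i) = Pᵀ := rfl
      rw [this, Matrix.det_transpose]
    have hPlast : ∀ i, i ≠ Fin.last m → P i (Fin.last m) = 0 := by
      intro i hi
      obtain ⟨i', rfl⟩ := Fin.exists_castSucc_eq.2 hi
      show w (Fin.castSucc i') (Fin.last m) = 0
      rw [hw1]; simp
    have h2 := det_last_col P hPlast
    have hPll : P (Fin.last m) (Fin.last m) = 1 := by
      show w (Fin.last m) (Fin.last m) = 1
      rw [hw2]; simp
    have hminor : P.submatrix Fin.castSucc Fin.castSucc = Matrix.of (fun i j => v i j) := by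
      ext i j
      show w (Fin.castSucc i) (Fin.castSucc j) = v i j
      rw [hw1]; simp
    have h3 : (Matrix.of fun i j => v j i) = (Matrix.of fun i j => v i j)ᵀ := rfl
    rw [h1, h2, hPll, hminor, one_mul, h3, Matrix.det_transpose]
end

theorem stmt18 (m : ℕ) (S : Set (Fin m → ℝ)) (hfin : S.Finite) (hne : S.Nonempty) :
    (diffSet (pyr S)).ncard = (diffSet S).ncard + 2 * S.ncard ∧
    DeltaSet (diffSet (pyr S)) = DeltaSet (diffSet S) :=
  ⟨card_part S hfin hne, delta_part S hfin hne⟩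
end
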